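/- arXiv:2309.00332 — 7 statements merged into one kernel-verified Lean document; each statement's English description precedes it below -/
import Mathlib

section
/- Let K be a field of characteristic zero and L a Lie algebra over K with dim L > 1. If every 1/2-derivation of L is trivial (i.e., equal to multiplication by some fixed element of K), then every transposed Poisson structure on L is trivial (i.e., x·y = 0 for all x,y ∈ L). -/
open scoped Classical

noncomputable section

/-- A `1/2`-derivation of a Lie algebra `L` over `K`:
`φ ⁅a, b⁆ = (1/2) • (⁅φ a, b⁆ + ⁅a, φ b⁆)`. -/
def IsHalfDerivation (K L : Type*) [Field K] [LieRing L] [LieAlgebra K L]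
    (φ : L →ₗ[K] L) : Prop :=
  ∀ a b : L, φ ⁅a, b⁆ = (2⁻¹ : K) • (⁅φ a, b⁆ + ⁅a, φ b⁆)

/-- A transposed Poisson structure on a Lie algebra `(L, ⁅·,·⁆)`: a bilinear, commutative,
associative product satisfying `2 • z · ⁅x, y⁆ = ⁅z · x, y⁆ + ⁅x, z · y⁆`. -/
def IsTPStructure (K L : Type*) [Field K] [LieRing L] [LieAlgebra K L]
    (mul : L →ₗ[K] L →ₗ[K] L) : Prop :=
  (∀ a b : L, mul a b = mul b a) ∧
  (∀ a b c : L, mul (mul a b) c = mul a (mul b c)) ∧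
  (∀ x y z : L, (2 : K) • mul z ⁅x, y⁆ = ⁅mul z x, y⁆ + ⁅x, mul z y⁆)

/-- if `dim L > 1` and every `1/2`-derivation of `L` is trivial
(multiplication by a fixed scalar), then every transposed Poisson structure on `L`
is trivial. -/
theorem statement1 (K L : Type*) [Field K] [CharZero K] [LieRing L] [LieAlgebra K L]
    (hdim : 1 < Module.rank K L)
    (htriv : ∀ φ : L →ₗ[K] L, IsHalfDerivation K L φ →
      ∃ k : K, φ = k • (LinearMap.id : L →ₗ[K] L))
    (mul : L →ₗ[K] L →ₗ[K] L) (hmul : IsTPStructure K L mul) :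
    ∀ x y : L, mul x y = 0 := by
  have key : ∀ z : L, ∃ k : K, ∀ w : L, mul z w = k • w := by
    intro z
    obtain ⟨k, hk⟩ := htriv (mul z) (by
      intro a b
      rw [← hmul.2.2 a b z, smul_smul]
      norm_num)
    exact ⟨k, fun w => by rw [hk]; rfl⟩
  choose k hk using key
  have hzero : ∀ z : L, k z = 0 := by
    intro z
    by_contra hz
    have hle : Module.rank K L ≤ 1 := by
      rw [rank_le_one_iff]
      refine ⟨z, fun v => ⟨(k z)⁻¹ * k v, ?_⟩⟩
      have h1 : mul z v = mul v z := hmul.1 z v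
      rw [hk z v, hk v z] at h1
      rw [mul_smul, ← h1, smul_smul, inv_mul_cancel₀ hz, one_smul]
    exact absurd hdim (not_lt.mpr hle)
  intro x y
  rw [hk x y, hzero x, zero_smul]
end
end

section
/- Let K be a field, X a finite poset, Y ⊆ X a subset with the induced order, and φ a 1/2-derivation of the Lie algebra (I(X,K),[·,·]). Define φ_Y : I(Y,K) → I(Y,K) by φ_Y(f) = (φ(f))_Y, the I(Y,K)-component of φ(f). Then φ_Y is a 1/2-derivation of the Lie algebra (I(Y,K),[·,·]). -/
open scoped Classical

attribute [local instance] LieRing.ofAssociativeRing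

noncomputable section

/-- Extension by zero, `I(Y,K) → I(X,K)`. -/
def extY (K : Type*) {X : Type*} [Field K] [PartialOrder X]
    (Y : Set X) [DecidablePred (· ∈ Y)] :
    IncidenceAlgebra K ↥Y →ₗ[K] IncidenceAlgebra K X where
  toFun f :=
    ⟨fun x y => if hx : x ∈ Y then if hy : y ∈ Y then f ⟨x, hx⟩ ⟨y, hy⟩ else 0 else 0, by
      intro x y hxy
      show (if hx : x ∈ Y then if hy : y ∈ Y then f ⟨x, hx⟩ ⟨y, hy⟩ else 0 else 0) = 0
      split_ifs with hx hy
      · exact IncidenceAlgebra.apply_eq_zero_of_not_le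
          (fun hle => hxy (Subtype.mk_le_mk.mp hle)) f
      · rfl
      · rfl⟩
  map_add' f g := by
    refine IncidenceAlgebra.ext fun x y _ => ?_
    simp only [IncidenceAlgebra.coe_mk, IncidenceAlgebra.add_apply]
    split_ifs <;> simp [IncidenceAlgebra.add_apply]
  map_smul' c f := by
    refine IncidenceAlgebra.ext fun x y _ => ?_
    simp only [IncidenceAlgebra.coe_mk, RingHom.id_apply,
      IncidenceAlgebra.constSMul_apply]
    split_ifs <;> simp [IncidenceAlgebra.constSMul_apply]

/-- Restriction to `Y`, `I(X,K) → I(Y,K)`; composed with `extY` it yields the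
`I(Y,K)`-component `f ↦ f_Y`. -/
def resY (K : Type*) {X : Type*} [Field K] [PartialOrder X]
    (Y : Set X) [DecidablePred (· ∈ Y)] :
    IncidenceAlgebra K X →ₗ[K] IncidenceAlgebra K ↥Y where
  toFun f :=
    ⟨fun a b => f a.1 b.1, fun a b hab =>
      IncidenceAlgebra.apply_eq_zero_of_not_le
        (fun hle => hab (Subtype.coe_le_coe.mp hle)) f⟩
  map_add' f g := by
    refine IncidenceAlgebra.ext fun a b _ => ?_
    simp [IncidenceAlgebra.add_apply]
  map_smul' c f := by
    refine IncidenceAlgebra.ext fun a b _ => ?_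
    simp [IncidenceAlgebra.constSMul_apply]


section Aux

variable {K X : Type*} [Field K] [PartialOrder X] [Fintype X]
    [LocallyFiniteOrder X] [DecidableEq X] (Y : Set X) [DecidablePred (· ∈ Y)]

lemma extY_apply (f : IncidenceAlgebra K ↥Y) (x y : X) :
    extY K Y f x y =
      if hx : x ∈ Y then if hy : y ∈ Y then f ⟨x, hx⟩ ⟨y, hy⟩ else 0 else 0 := rfl

lemma resY_apply (f : IncidenceAlgebra K X) (a b : ↥Y) :
    resY K Y f a b = f a.1 b.1 := rfl

lemma extY_apply_coe (f : IncidenceAlgebra K ↥Y) (a b : ↥Y) :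
    extY K Y f a.1 b.1 = f a b := by
  rw [extY_apply, dif_pos a.2, dif_pos b.2]

lemma sum_Icc_subtype (a b : ↥Y) (g : X → K)
    (hg : ∀ z ∈ Finset.Icc a.1 b.1, g z ≠ 0 → z ∈ Y) :
    ∑ z ∈ Finset.Icc a b, g z.1 = ∑ z ∈ Finset.Icc a.1 b.1, g z := by
  rw [Finset.subtype_Icc_eq, Finset.sum_subtype_eq_sum_filter,
    Finset.sum_filter_of_ne hg]

lemma resY_mul_extY_right (u : IncidenceAlgebra K X) (b : IncidenceAlgebra K ↥Y) :
    resY K Y (u * extY K Y b) = resY K Y u * b := by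
  refine IncidenceAlgebra.ext fun x y _ => ?_
  rw [resY_apply, IncidenceAlgebra.mul_apply, IncidenceAlgebra.mul_apply]
  have : ∀ z : ↥Y, resY K Y u x z * b z y = u x.1 z.1 * extY K Y b z.1 y.1 := by
    intro z; rw [resY_apply, extY_apply_coe]
  simp_rw [this]
  refine (sum_Icc_subtype (K := K) Y x y _ fun z _ hz => ?_).symm
  by_contra hzY
  exact hz (by rw [extY_apply, dif_neg hzY, mul_zero])

lemma resY_extY_mul_left (a : IncidenceAlgebra K ↥Y) (v : IncidenceAlgebra K X) :
    resY K Y (extY K Y a * v) = a * resY K Y v := by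
  refine IncidenceAlgebra.ext fun x y _ => ?_
  rw [resY_apply, IncidenceAlgebra.mul_apply, IncidenceAlgebra.mul_apply]
  have : ∀ z : ↥Y, a x z * resY K Y v z y = extY K Y a x.1 z.1 * v z.1 y.1 := by
    intro z; rw [resY_apply, extY_apply_coe]
  simp_rw [this]
  refine (sum_Icc_subtype (K := K) Y x y _ fun z _ hz => ?_).symm
  by_contra hzY
  exact hz (by rw [extY_apply, dif_pos x.2, dif_neg hzY, zero_mul])

lemma extY_mul (a b : IncidenceAlgebra K ↥Y) :
    extY K Y (a * b) = extY K Y a * extY K Y b := by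
  refine IncidenceAlgebra.ext fun x y _ => ?_
  rw [IncidenceAlgebra.mul_apply, extY_apply]
  split_ifs with hx hy
  · rw [IncidenceAlgebra.mul_apply]
    have : ∀ z : ↥Y, a ⟨x, hx⟩ z * b z ⟨y, hy⟩ = extY K Y a x z.1 * extY K Y b z.1 y := by
      intro z
      rw [extY_apply, extY_apply, dif_pos hx, dif_pos z.2, dif_pos z.2, dif_pos hy]
    simp_rw [this]
    refine sum_Icc_subtype (K := K) Y ⟨x, hx⟩ ⟨y, hy⟩
      (fun z => extY K Y a x z * extY K Y b z y) fun z _ hz => ?_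
    by_contra hzY
    exact hz (by show extY K Y a x z * _ = 0
                 rw [extY_apply, dif_pos hx, dif_neg hzY, zero_mul])
  · refine (Finset.sum_eq_zero fun z _ => ?_).symm
    by_cases hzY : z ∈ Y
    · rw [extY_apply (f := b), dif_pos hzY, dif_neg hy, mul_zero]
    · rw [extY_apply (f := a), dif_pos hx, dif_neg hzY, zero_mul]
  · refine (Finset.sum_eq_zero fun z _ => ?_).symm
    rw [extY_apply (f := a), dif_neg hx, zero_mul]

lemma resY_lie_extY_right (u : IncidenceAlgebra K X) (b : IncidenceAlgebra K ↥Y) :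
    resY K Y ⁅u, extY K Y b⁆ = ⁅resY K Y u, b⁆ := by
  rw [Ring.lie_def, Ring.lie_def, map_sub, resY_mul_extY_right, resY_extY_mul_left]

lemma resY_lie_extY_left (a : IncidenceAlgebra K ↥Y) (v : IncidenceAlgebra K X) :
    resY K Y ⁅extY K Y a, v⁆ = ⁅a, resY K Y v⁆ := by
  rw [Ring.lie_def, Ring.lie_def, map_sub, resY_extY_mul_left, resY_mul_extY_right]

lemma extY_lie (a b : IncidenceAlgebra K ↥Y) :
    extY K Y ⁅a, b⁆ = ⁅extY K Y a, extY K Y b⁆ := by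
  rw [Ring.lie_def, Ring.lie_def, map_sub, extY_mul, extY_mul]

end Aux

/-- if `φ` is a `1/2`-derivation of the Lie algebra `I(X,K)`, then
`φ_Y : f ↦ (φ f)_Y` is a `1/2`-derivation of the Lie algebra `I(Y,K)`. -/
theorem statement5 (K X : Type*) [Field K] [PartialOrder X] [Fintype X]
    [LocallyFiniteOrder X] [DecidableEq X] (Y : Set X) [DecidablePred (· ∈ Y)]
    (φ : IncidenceAlgebra K X →ₗ[K] IncidenceAlgebra K X)
    (hφ : IsHalfDerivation K (IncidenceAlgebra K X) φ) :
    IsHalfDerivation K (IncidenceAlgebra K ↥Y) ((resY K Y).comp (φ.comp (extY K Y))) := by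
  intro a b
  simp only [LinearMap.comp_apply]
  rw [extY_lie, hφ, map_smul, map_add, resY_lie_extY_right, resY_lie_extY_left]
end
end

section
/- Let K be a field of characteristic zero, X a finite connected poset, and φ ∈ Δ(I(X,K)). Then for all x < y in X: [φ(e_x), e_{xy}] = (φ(e_x)(x,x) − φ(e_x)(y,y)) e_{xy} and [e_{xy}, φ(e_y)] = (φ(e_y)(y,y) − φ(e_y)(x,x)) e_{xy}. -/
open scoped Classical

noncomputable section

attribute [local instance 100] LieRing.ofAssociativeRing

/-- The standard basis element `e_{xy}` (for `x ≤ y`) of the incidence algebra. -/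
def eI (K : Type*) {X : Type*} [Field K] [PartialOrder X] [DecidableEq X]
    (x y : X) (h : x ≤ y) : IncidenceAlgebra K X :=
  ⟨fun u v => if x = u ∧ y = v then (1 : K) else 0, by
    intro u v huv
    show (if x = u ∧ y = v then (1 : K) else 0) = 0
    rw [if_neg]; rintro ⟨rfl, rfl⟩; exact huv h⟩

/-- A walk `u 0, u 1, …, u m` in a poset: consecutive vertices are comparable and
cover one another (`l(x,y) = 1`). -/
def IsWalkOn {X : Type*} [PartialOrder X] (u : ℕ → X) (m : ℕ) : Prop :=
  ∀ i < m, u i ⋖ u (i + 1) ∨ u (i + 1) ⋖ u i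

/-- A poset is connected if any two of its elements are joined by a walk. -/
def ConnectedPoset (X : Type*) [PartialOrder X] : Prop :=
  ∀ x y : X, ∃ (u : ℕ → X) (m : ℕ), IsWalkOn u m ∧ u 0 = x ∧ u m = y

namespace S6Aux
set_option linter.unusedSectionVars false

variable {K X : Type*} [Field K] [CharZero K] [PartialOrder X] [Fintype X]
    [LocallyFiniteOrder X] [DecidableEq X]

lemma eI_apply (x y : X) (h : x ≤ y) (u v : X) :
    eI K x y h u v = if x = u ∧ y = v then (1 : K) else 0 := rfl

lemma mul_eI (f : IncidenceAlgebra K X) (x y : X) (h : x ≤ y) (u v : X) :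
    (f * eI K x y h) u v = if y = v then f u x else 0 := by
  rw [IncidenceAlgebra.mul_apply]
  simp only [eI_apply, mul_ite, mul_one, mul_zero]
  by_cases hv : y = v
  · subst hv
    simp only [and_true]
    rw [Finset.sum_ite_eq (Finset.Icc u y) x (fun z => f u z)]
    by_cases hm : x ∈ Finset.Icc u y
    · simp [hm]
    · have hm' := hm
      rw [Finset.mem_Icc, not_and] at hm'
      have hz : f u x = 0 := IncidenceAlgebra.apply_eq_zero_of_not_le (fun hle => hm' hle h) f
      simp [hm, hz]
  · rw [if_neg hv]
    refine Finset.sum_eq_zero fun z _ => ?_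
    rw [if_neg (fun hc => hv hc.2)]

lemma eI_mul (f : IncidenceAlgebra K X) (x y : X) (h : x ≤ y) (u v : X) :
    (eI K x y h * f) u v = if x = u then f y v else 0 := by
  rw [IncidenceAlgebra.mul_apply]
  simp only [eI_apply, ite_mul, one_mul, zero_mul]
  by_cases hu : x = u
  · subst hu
    simp only [true_and]
    rw [Finset.sum_ite_eq (Finset.Icc x v) y (fun z => f z v)]
    by_cases hm : y ∈ Finset.Icc x v
    · simp [hm]
    · have hm' := hm
      rw [Finset.mem_Icc, not_and] at hm'
      have hz : f y v = 0 := IncidenceAlgebra.apply_eq_zero_of_not_le (hm' h) f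
      simp [hm, hz]
  · rw [if_neg hu]
    refine Finset.sum_eq_zero fun z _ => ?_
    rw [if_neg (fun hc => hu hc.1)]

lemma lie_apply (f g : IncidenceAlgebra K X) (a b : X) :
    ⁅f, g⁆ a b = (f * g) a b - (g * f) a b := by
  rw [Ring.lie_def, IncidenceAlgebra.sub_apply]

lemma coeff {A B : IncidenceAlgebra K X} (h : A = B) (a b : X) : A a b = B a b := by rw [h]


lemma bracket_diag_diag (x z : X) (hxz : x ≠ z) :
    ⁅eI K x x le_rfl, eI K z z le_rfl⁆ = (0 : IncidenceAlgebra K X) := by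
  ext a b _
  rw [lie_apply]
  rw [mul_eI, eI_mul, IncidenceAlgebra.zero_apply, eI_apply, eI_apply]
  rcases eq_or_ne z b with rfl | h1 <;> rcases eq_or_ne z a with rfl | h2 <;>
    simp_all <;> aesop

lemma bracket_ex_E (x y : X) (hxy : x < y) :
    ⁅eI K x x le_rfl, eI K x y hxy.le⁆ = eI K x y hxy.le := by
  have hne : x ≠ y := hxy.ne
  ext a b _
  rw [lie_apply, eI_mul, mul_eI, eI_apply, eI_apply, eI_apply]
  rcases eq_or_ne x a with rfl | h1 <;> rcases eq_or_ne x b with rfl | h2 <;>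
    simp_all <;> aesop

lemma bracket_E_ey (x y : X) (hxy : x < y) :
    ⁅eI K x y hxy.le, eI K y y le_rfl⁆ = eI K x y hxy.le := by
  have hne : x ≠ y := hxy.ne
  ext a b _
  rw [lie_apply, mul_eI, eI_mul, eI_apply, eI_apply, eI_apply]
  rcases eq_or_ne y b with rfl | h1 <;> rcases eq_or_ne y a with rfl | h2 <;>
    simp_all <;> aesop

lemma bracket_eu_E (x y u : X) (hxy : x < y) (hux : u ≠ x) (huy : u ≠ y) :
    ⁅eI K u u le_rfl, eI K x y hxy.le⁆ = (0 : IncidenceAlgebra K X) := by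
  ext a b _
  rw [lie_apply, eI_mul, mul_eI, IncidenceAlgebra.zero_apply, eI_apply, eI_apply]
  rcases eq_or_ne u a with rfl | h1 <;> rcases eq_or_ne y b with rfl | h2 <;>
    simp_all <;> aesop

lemma comm0 (φ : IncidenceAlgebra K X →ₗ[K] IncidenceAlgebra K X)
    (hφ : IsHalfDerivation K (IncidenceAlgebra K X) φ) {a b : IncidenceAlgebra K X}
    (hab : ⁅a, b⁆ = 0) : ⁅φ a, b⁆ + ⁅a, φ b⁆ = 0 := by
  have h := hφ a b
  rw [hab, map_zero] at h
  have h2 : (2⁻¹ : K) ≠ 0 := by norm_num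
  exact ((smul_eq_zero.mp h.symm).resolve_left h2)


lemma F2 (φ : IncidenceAlgebra K X →ₗ[K] IncidenceAlgebra K X)
    (hφ : IsHalfDerivation K (IncidenceAlgebra K X) φ) {x y v : X}
    (hxy : x < y) (hyv : y < v) : φ (eI K x x le_rfl) y v = 0 := by
  have c1 := coeff (comm0 φ hφ (bracket_diag_diag (K := K) x y hxy.ne)) y v
  simp only [IncidenceAlgebra.add_apply, lie_apply, mul_eI, eI_mul,
    IncidenceAlgebra.zero_apply] at c1
  rw [if_neg hyv.ne, if_pos trivial, if_neg hxy.ne, if_neg (hxy.trans hyv).ne] at c1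
  linear_combination -c1

lemma F4 (φ : IncidenceAlgebra K X →ₗ[K] IncidenceAlgebra K X)
    (hφ : IsHalfDerivation K (IncidenceAlgebra K X) φ) {x y u : X}
    (hxy : x < y) (hux : u < x) : φ (eI K y y le_rfl) u x = 0 := by
  have c1 := coeff (comm0 φ hφ (bracket_diag_diag (K := K) y x hxy.ne')) u x
  simp only [IncidenceAlgebra.add_apply, lie_apply, mul_eI, eI_mul,
    IncidenceAlgebra.zero_apply] at c1
  rw [if_pos trivial, if_neg hux.ne', if_neg (hux.trans hxy).ne', if_neg hxy.ne'] at c1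
  linear_combination c1


lemma F1 (φ : IncidenceAlgebra K X →ₗ[K] IncidenceAlgebra K X)
    (hφ : IsHalfDerivation K (IncidenceAlgebra K X) φ) {x y u : X}
    (hxy : x < y) (hux : u < x) : φ (eI K x x le_rfl) u x = 0 := by
  have huy : u < y := hux.trans hxy
  -- step 1 : f u x = - (φ e_u) u x
  have c1 := coeff (comm0 φ hφ (bracket_diag_diag (K := K) x u hux.ne')) u x
  simp only [IncidenceAlgebra.add_apply, lie_apply, mul_eI, eI_mul,
    IncidenceAlgebra.zero_apply] at c1
  rw [if_neg hux.ne, if_pos trivial, if_neg hux.ne', if_pos trivial] at c1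
  -- step 2 : (φ e_u) u x + (φ E) u y = 0
  have c2 := coeff (comm0 φ hφ (bracket_eu_E (K := K) x y u hxy hux.ne huy.ne)) u y
  simp only [IncidenceAlgebra.add_apply, lie_apply, mul_eI, eI_mul,
    IncidenceAlgebra.zero_apply] at c2
  rw [if_pos trivial, if_neg hux.ne', if_pos trivial, if_neg huy.ne] at c2
  -- step 3 : (φ E) u y = 2⁻¹ * (f u x)
  have e3 := hφ (eI K x x le_rfl) (eI K x y hxy.le)
  rw [bracket_ex_E (K := K) x y hxy] at e3
  have c3 := coeff e3 u y
  simp only [IncidenceAlgebra.constSMul_apply, smul_eq_mul, IncidenceAlgebra.add_apply,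
    lie_apply, mul_eI, eI_mul] at c3
  rw [if_pos trivial, if_neg hux.ne', if_neg hux.ne', if_neg hxy.ne] at c3
  linear_combination 2 * c3 - 2 * c1 - 2 * c2

lemma F3 (φ : IncidenceAlgebra K X →ₗ[K] IncidenceAlgebra K X)
    (hφ : IsHalfDerivation K (IncidenceAlgebra K X) φ) {x y v : X}
    (hxy : x < y) (hyv : y < v) : φ (eI K y y le_rfl) y v = 0 := by
  have hxv : x < v := hxy.trans hyv
  -- step 1 : g y v + (φ e_v) y v = 0
  have c1 := coeff (comm0 φ hφ (bracket_diag_diag (K := K) y v hyv.ne)) y v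
  simp only [IncidenceAlgebra.add_apply, lie_apply, mul_eI, eI_mul,
    IncidenceAlgebra.zero_apply] at c1
  rw [if_pos trivial, if_neg hyv.ne', if_pos trivial, if_neg hyv.ne] at c1
  -- step 2 : - (φ e_v) y v - (φ E) x v = 0
  have c2 := coeff (comm0 φ hφ (bracket_eu_E (K := K) x y v hxy hxv.ne' hyv.ne')) x v
  simp only [IncidenceAlgebra.add_apply, lie_apply, mul_eI, eI_mul,
    IncidenceAlgebra.zero_apply] at c2
  rw [if_neg hyv.ne, if_pos trivial, if_neg hxv.ne', if_pos trivial] at c2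
  -- step 3 : (φ E) x v = 2⁻¹ * (g y v)
  have e3 := hφ (eI K x y hxy.le) (eI K y y le_rfl)
  rw [bracket_E_ey (K := K) x y hxy] at e3
  have c3 := coeff e3 x v
  simp only [IncidenceAlgebra.constSMul_apply, smul_eq_mul, IncidenceAlgebra.add_apply,
    lie_apply, mul_eI, eI_mul] at c3
  rw [if_neg hyv.ne, if_neg hxy.ne', if_pos trivial, if_neg hyv.ne] at c3
  linear_combination 2 * c1 + 2 * c2 + 2 * c3

end S6Aux

/-- for a `1/2`-derivation `φ` of `I(X,K)` over a finite connected poset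
and `x < y`:
`⁅φ e_x, e_{xy}⁆ = (φ(e_x)(x,x) − φ(e_x)(y,y)) e_{xy}` and
`⁅e_{xy}, φ e_y⁆ = (φ(e_y)(y,y) − φ(e_y)(x,x)) e_{xy}`. -/
theorem statement6 (K X : Type*) [Field K] [CharZero K] [PartialOrder X] [Fintype X]
    [LocallyFiniteOrder X] [DecidableEq X] (hconn : ConnectedPoset X)
    (φ : IncidenceAlgebra K X →ₗ[K] IncidenceAlgebra K X)
    (hφ : IsHalfDerivation K (IncidenceAlgebra K X) φ)
    (x y : X) (hxy : x < y) :
    ⁅φ (eI K x x le_rfl), eI K x y hxy.le⁆ =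
      (φ (eI K x x le_rfl) x x - φ (eI K x x le_rfl) y y) • eI K x y hxy.le ∧
    ⁅eI K x y hxy.le, φ (eI K y y le_rfl)⁆ =
      (φ (eI K y y le_rfl) y y - φ (eI K y y le_rfl) x x) • eI K x y hxy.le := by
  constructor
  · ext a b hab
    rw [S6Aux.lie_apply, S6Aux.mul_eI, S6Aux.eI_mul, IncidenceAlgebra.constSMul_apply,
      smul_eq_mul, S6Aux.eI_apply]
    by_cases h1 : x = a <;> by_cases h2 : y = b
    · subst h1; subst h2
      rw [if_pos rfl, if_pos rfl, if_pos ⟨rfl, rfl⟩, mul_one]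
    · subst h1
      rw [if_neg h2, if_pos rfl, if_neg (fun hc => h2 hc.2), mul_zero, zero_sub, neg_eq_zero]
      by_cases hyb : y ≤ b
      · exact S6Aux.F2 φ hφ hxy (lt_of_le_of_ne hyb h2)
      · exact IncidenceAlgebra.apply_eq_zero_of_not_le hyb _
    · subst h2
      rw [if_pos rfl, if_neg h1, if_neg (fun hc => h1 hc.1), mul_zero, sub_zero]
      by_cases hax : a ≤ x
      · exact S6Aux.F1 φ hφ hxy (lt_of_le_of_ne hax (fun e => h1 e.symm))
      · exact IncidenceAlgebra.apply_eq_zero_of_not_le hax _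
    · rw [if_neg h2, if_neg h1, if_neg (fun hc => h1 hc.1), mul_zero, sub_zero]
  · ext a b hab
    rw [S6Aux.lie_apply, S6Aux.eI_mul, S6Aux.mul_eI, IncidenceAlgebra.constSMul_apply,
      smul_eq_mul, S6Aux.eI_apply]
    by_cases h1 : x = a <;> by_cases h2 : y = b
    · subst h1; subst h2
      rw [if_pos rfl, if_pos rfl, if_pos ⟨rfl, rfl⟩, mul_one]
    · subst h1
      rw [if_neg h2, if_pos rfl, if_neg (fun hc => h2 hc.2), mul_zero, sub_zero]
      by_cases hyb : y ≤ b
      · exact S6Aux.F3 φ hφ hxy (lt_of_le_of_ne hyb h2)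
      · exact IncidenceAlgebra.apply_eq_zero_of_not_le hyb _
    · subst h2
      rw [if_pos rfl, if_neg h1, if_neg (fun hc => h1 hc.1), mul_zero, zero_sub, neg_eq_zero]
      by_cases hax : a ≤ x
      · exact S6Aux.F4 φ hφ hxy (lt_of_le_of_ne hax (fun e => h1 e.symm))
      · exact IncidenceAlgebra.apply_eq_zero_of_not_le hax _
    · rw [if_neg h2, if_neg h1, if_neg (fun hc => h1 hc.1), mul_zero, sub_zero]
end
end

section
/- Let K be a field of characteristic zero, X a finite connected poset, and φ ∈ Δ(I(X,K)). Then for all x < y in X: φ(e_{xy}) = (φ(e_x)(x,x) − φ(e_x)(y,y)) e_{xy} = (φ(e_y)(y,y) − φ(e_y)(x,x)) e_{xy}; in particular φ(e_{xy}) is a scalar multiple of e_{xy}. -/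
open scoped Classical

attribute [local instance 100] LieRing.ofAssociativeRing

noncomputable section

lemma eI_apply (K : Type*) {X : Type*} [Field K] [PartialOrder X] [DecidableEq X]
    (x y : X) (h : x ≤ y) (u v : X) :
    eI K x y h u v = if x = u ∧ y = v then (1 : K) else 0 := rfl

lemma mul_eI {K X : Type*} [Field K] [PartialOrder X] [LocallyFiniteOrder X] [DecidableEq X]
    (f : IncidenceAlgebra K X) (x y : X) (h : x ≤ y) (u v : X) :
    (f * eI K x y h) u v = if y = v then f u x else 0 := by
  rw [IncidenceAlgebra.mul_apply]
  have key : ∀ t, f u t * (eI K x y h) t v = if x = t ∧ y = v then f u t else 0 := by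
    intro t
    rw [eI_apply]
    split_ifs <;> simp
  simp_rw [key]
  by_cases hv : y = v
  · simp only [hv, and_true]
    rw [Finset.sum_ite_eq]
    by_cases hm : x ∈ Finset.Icc u v
    · simp [hm]
    · rw [if_neg hm, if_pos trivial]
      have hux : ¬ u ≤ x := fun hux => hm (Finset.mem_Icc.2 ⟨hux, hv ▸ h⟩)
      rw [IncidenceAlgebra.apply_eq_zero_of_not_le hux]
  · simp [hv]

lemma eI_mul {K X : Type*} [Field K] [PartialOrder X] [LocallyFiniteOrder X] [DecidableEq X]
    (f : IncidenceAlgebra K X) (x y : X) (h : x ≤ y) (u v : X) :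
    (eI K x y h * f) u v = if x = u then f y v else 0 := by
  rw [IncidenceAlgebra.mul_apply]
  have key : ∀ t, (eI K x y h) u t * f t v = if y = t ∧ x = u then f t v else 0 := by
    intro t
    rw [eI_apply]
    split_ifs with h1 h2 h2 <;> simp_all
  simp_rw [key]
  by_cases hu : x = u
  · simp only [hu, and_true]
    rw [Finset.sum_ite_eq]
    by_cases hm : y ∈ Finset.Icc u v
    · simp [hm]
    · rw [if_neg hm, if_pos trivial]
      have hyv : ¬ y ≤ v := fun hyv => hm (Finset.mem_Icc.2 ⟨hu ▸ h, hyv⟩)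
      rw [IncidenceAlgebra.apply_eq_zero_of_not_le hyv]
  · simp [hu]

/-- for a `1/2`-derivation `φ` of `I(X,K)` over a finite connected poset
and `x < y`, `φ e_{xy} = (φ(e_x)(x,x) − φ(e_x)(y,y)) e_{xy}
= (φ(e_y)(y,y) − φ(e_y)(x,x)) e_{xy}`; in particular `φ e_{xy}` is a scalar multiple
of `e_{xy}`. -/
theorem statement7 (K X : Type*) [Field K] [CharZero K] [PartialOrder X] [Fintype X]
    [LocallyFiniteOrder X] [DecidableEq X] (hconn : ConnectedPoset X)
    (φ : IncidenceAlgebra K X →ₗ[K] IncidenceAlgebra K X)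
    (hφ : IsHalfDerivation K (IncidenceAlgebra K X) φ)
    (x y : X) (hxy : x < y) :
    φ (eI K x y hxy.le) =
      (φ (eI K x x le_rfl) x x - φ (eI K x x le_rfl) y y) • eI K x y hxy.le ∧
    φ (eI K x y hxy.le) =
      (φ (eI K y y le_rfl) y y - φ (eI K y y le_rfl) x x) • eI K x y hxy.le ∧
    ∃ k : K, φ (eI K x y hxy.le) = k • eI K x y hxy.le := by
  classical
  set E := eI K x y hxy.le with hEdef
  set Ex := eI K x x le_rfl with hExdef
  set Ey := eI K y y le_rfl with hEydef
  set a := φ Ex with hadef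
  set b := φ Ey with hbdef
  set g := φ E with hgdef
  have hxny : x ≠ y := hxy.ne
  have hynx : ¬ y ≤ x := not_le_of_gt hxy
  have hayx : a y x = 0 := IncidenceAlgebra.apply_eq_zero_of_not_le hynx a
  have hbyx : b y x = 0 := IncidenceAlgebra.apply_eq_zero_of_not_le hynx b
  -- the three bracket relations
  have h1 : ⁅Ex, E⁆ = E := by
    ext u v _
    rw [Ring.lie_def, IncidenceAlgebra.sub_apply, eI_mul, mul_eI]
    rw [hEdef]
    simp only [eI_apply]
    split_ifs <;> simp_all
  have h2 : ⁅E, Ey⁆ = E := by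
    ext u v _
    rw [Ring.lie_def, IncidenceAlgebra.sub_apply, mul_eI, eI_mul]
    rw [hEdef]
    simp only [eI_apply]
    split_ifs <;> simp_all
  have h3 : ⁅Ex, Ey⁆ = 0 := by
    ext u v _
    simp only [Ring.lie_def, IncidenceAlgebra.sub_apply, eI_mul, mul_eI, hEydef, hExdef, eI_apply,
      IncidenceAlgebra.zero_apply]
    split_ifs <;> simp_all
  -- scalar coefficient equations
  have c1 : ∀ u v, 2 * g u v =
      ((if y = v then a u x else 0) - (if x = u then a y v else 0)) +
      ((if x = u then g x v else 0) - (if x = v then g u x else 0)) := by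
    intro u v
    have h := hφ Ex E
    rw [h1, ← hadef, ← hgdef] at h
    have h' := congrFun (DFunLike.congr_fun h u) v
    rw [IncidenceAlgebra.constSMul_apply, smul_eq_mul, IncidenceAlgebra.add_apply,
      Ring.lie_def, Ring.lie_def, IncidenceAlgebra.sub_apply, IncidenceAlgebra.sub_apply,
      mul_eI, eI_mul, eI_mul, mul_eI] at h'
    linear_combination 2 * h'
  have c2 : ∀ u v, 2 * g u v =
      ((if y = v then g u y else 0) - (if y = u then g y v else 0)) +
      ((if x = u then b y v else 0) - (if y = v then b u x else 0)) := by
    intro u v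
    have h := hφ E Ey
    rw [h2, ← hbdef, ← hgdef] at h
    have h' := congrFun (DFunLike.congr_fun h u) v
    rw [IncidenceAlgebra.constSMul_apply, smul_eq_mul, IncidenceAlgebra.add_apply,
      Ring.lie_def, Ring.lie_def, IncidenceAlgebra.sub_apply, IncidenceAlgebra.sub_apply,
      mul_eI, eI_mul, eI_mul, mul_eI] at h'
    linear_combination 2 * h'
  have c3 : ∀ u v, (0 : K) =
      ((if y = v then a u y else 0) - (if y = u then a y v else 0)) +
      ((if x = u then b x v else 0) - (if x = v then b u x else 0)) := by
    intro u v
    have h := hφ Ex Ey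
    rw [h3, map_zero, ← hadef, ← hbdef] at h
    have h' := congrFun (DFunLike.congr_fun h.symm u) v
    rw [IncidenceAlgebra.constSMul_apply, smul_eq_mul, IncidenceAlgebra.add_apply,
      Ring.lie_def, Ring.lie_def, IncidenceAlgebra.sub_apply, IncidenceAlgebra.sub_apply,
      mul_eI, eI_mul, eI_mul, mul_eI, IncidenceAlgebra.zero_apply] at h'
    linear_combination -2 * h'
  have h2K : (2 : K) ≠ 0 := two_ne_zero
  have h3K : (3 : K) ≠ 0 := three_ne_zero
  -- consequences of c3
  have fA : ∀ v, v ≠ y → a y v = 0 := by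
    intro v hv
    have h := c3 y v
    rw [hbyx] at h
    simp only [if_neg (Ne.symm hv), if_pos rfl, if_neg hxny, ite_self, eq_self_iff_true, if_true] at h
    linear_combination h
  have fB : ∀ u, u ≠ x → b u x = 0 := by
    intro u hu
    have h := c3 u x
    rw [hayx] at h
    simp only [if_neg (Ne.symm hxny), if_neg (Ne.symm hu), if_pos rfl, ite_self, eq_self_iff_true, if_true] at h
    linear_combination h
  -- vanishing of off coefficients of g
  have gA : ∀ u v, u ≠ x → v ≠ y → g u v = 0 := by
    intro u v hu hv
    have h := c1 u v
    rw [if_neg (Ne.symm hv), if_neg (Ne.symm hu), if_neg (Ne.symm hu)] at h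
    by_cases hvx : x = v
    · subst hvx
      rw [if_pos rfl] at h
      have h3g : (3 : K) * g u x = 0 := by linear_combination h
      exact (mul_eq_zero.1 h3g).resolve_left h3K
    · rw [if_neg hvx] at h
      have h2g : (2 : K) * g u v = 0 := by linear_combination h
      exact (mul_eq_zero.1 h2g).resolve_left h2K
  have gB : ∀ v, v ≠ y → g x v = 0 := by
    intro v hv
    have h := c1 x v
    rw [if_neg (Ne.symm hv), if_pos rfl, if_pos rfl] at h
    by_cases hvx : x = v
    · subst hvx
      rw [if_pos rfl, hayx] at h
      have h2g : (2 : K) * g x x = 0 := by linear_combination h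
      exact (mul_eq_zero.1 h2g).resolve_left h2K
    · rw [if_neg hvx, fA v hv] at h
      linear_combination h
  have gC : ∀ u, u ≠ x → g u y = 0 := by
    intro u hu
    have h := c2 u y
    rw [if_pos rfl, if_pos rfl, if_neg (Ne.symm hu), fB u hu] at h
    by_cases huy : y = u
    · subst huy
      rw [if_pos rfl] at h
      have h2g : (2 : K) * g y y = 0 := by linear_combination h
      exact (mul_eq_zero.1 h2g).resolve_left h2K
    · rw [if_neg huy] at h
      linear_combination h
  -- the main coefficient
  have gxy1 : g x y = a x x - a y y := by
    have h := c1 x y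
    rw [if_pos rfl, if_pos rfl, if_pos rfl, if_neg hxny] at h
    linear_combination h
  have gxy2 : g x y = b y y - b x x := by
    have h := c2 x y
    rw [if_pos rfl, if_pos rfl, if_pos rfl, if_neg (Ne.symm hxny)] at h
    linear_combination h
  -- the master equality
  have hg : g = (g x y) • E := by
    ext u v _
    rw [IncidenceAlgebra.constSMul_apply, smul_eq_mul, hEdef, eI_apply]
    by_cases hu : x = u
    · subst hu
      by_cases hv : y = v
      · subst hv; simp
      · rw [if_neg (fun hc => hv hc.2), mul_zero]
        exact gB v (fun hc => hv hc.symm)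
    · rw [if_neg (fun hc => hu hc.1), mul_zero]
      by_cases hv : y = v
      · subst hv; exact gC u (fun hc => hu hc.symm)
      · exact gA u v (fun hc => hu hc.symm) (fun hc => hv hc.symm)
  refine ⟨?_, ?_, ⟨g x y, hg⟩⟩
  · rw [hg, gxy1]
  · rw [hg, gxy2]
end
end

section
/- Let K be a field of characteristic zero, X a finite connected poset, and φ ∈ Δ(I(X,K)). Then: (i) for all x ∈ X and u ≤ v in X with x ∉ {u,v}, φ(e_x)(u,u) = φ(e_x)(v,v); (ii) for all x < y and u < v belonging to a common chain of X, φ(e_{xy})(x,y) = φ(e_{uv})(u,v); (iii) for all x ∈ X and u < v, φ(e_x)(u,v) = 0 unless (x = u, u ∈ Min(X) and v ∈ Max(X)) or (x = v, u ∈ Min(X) and v ∈ Max(X)); (iv) for all x ∈ Min(X) and y ∈ Max(X) with x < y, φ(e_x)(x,y) = −φ(e_y)(x,y). -/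
open scoped Classical

noncomputable section

attribute [local instance] LieRing.ofAssociativeRing

namespace Statement8Aux

open Finset IncidenceAlgebra

variable {K X : Type*} [Field K] [PartialOrder X] [DecidableEq X]

lemma eI_apply (x y : X) (h : x ≤ y) (a b : X) :
    eI K x y h a b = if x = a ∧ y = b then 1 else 0 := rfl

variable [LocallyFiniteOrder X]

lemma eI_mul_apply (x y : X) (h : x ≤ y) (g : IncidenceAlgebra K X) (a b : X) :
    (eI K x y h * g) a b = if x = a then g y b else 0 := by
  rw [IncidenceAlgebra.mul_apply]
  by_cases hxa : x = a
  · subst hxa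
    rw [if_pos rfl]
    by_cases hyb : y ≤ b
    · rw [Finset.sum_eq_single y (fun z hz hne => by simp [eI_apply, Ne.symm hne])
        (fun hy => absurd (Finset.mem_Icc.2 ⟨h, hyb⟩) hy)]
      simp [eI_apply]
    · rw [IncidenceAlgebra.apply_eq_zero_of_not_le hyb]
      refine Finset.sum_eq_zero fun z hz => ?_
      have hyz : y ≠ z := fun e => hyb (e ▸ (Finset.mem_Icc.1 hz).2)
      simp [eI_apply, hyz]
  · rw [if_neg hxa]
    exact Finset.sum_eq_zero fun z hz => by simp [eI_apply, hxa]

lemma mul_eI_apply (x y : X) (h : x ≤ y) (g : IncidenceAlgebra K X) (a b : X) :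
    (g * eI K x y h) a b = if y = b then g a x else 0 := by
  rw [IncidenceAlgebra.mul_apply]
  by_cases hyb : y = b
  · subst hyb
    rw [if_pos rfl]
    by_cases hax : a ≤ x
    · rw [Finset.sum_eq_single x (fun z hz hne => by simp [eI_apply, hne.symm])
        (fun hx => absurd (Finset.mem_Icc.2 ⟨hax, h⟩) hx)]
      simp [eI_apply]
    · rw [IncidenceAlgebra.apply_eq_zero_of_not_le hax]
      refine Finset.sum_eq_zero fun z hz => ?_
      have hxz : x ≠ z := fun e => hax (e ▸ (Finset.mem_Icc.1 hz).1)
      simp [eI_apply, hxz]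
  · rw [if_neg hyb]
    exact Finset.sum_eq_zero fun z hz => by simp [eI_apply, hyb]

@[simp] lemma eI_lie_apply (x y : X) (h : x ≤ y) (g : IncidenceAlgebra K X) (a b : X) :
    ⁅eI K x y h, g⁆ a b = (if x = a then g y b else 0) - (if y = b then g a x else 0) := by
  rw [Ring.lie_def, IncidenceAlgebra.sub_apply, eI_mul_apply, mul_eI_apply]

@[simp] lemma lie_eI_apply (x y : X) (h : x ≤ y) (g : IncidenceAlgebra K X) (a b : X) :
    ⁅g, eI K x y h⁆ a b = (if y = b then g a x else 0) - (if x = a then g y b else 0) := by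
  rw [Ring.lie_def, IncidenceAlgebra.sub_apply, eI_mul_apply, mul_eI_apply]

lemma lie_eI_eI_eq_zero {x u v : X} (hxu : x ≠ u) (hxv : x ≠ v) (h : u ≤ v) :
    ⁅eI K x x le_rfl, eI K u v h⁆ = (0 : IncidenceAlgebra K X) := by
  ext a b hab
  rw [eI_lie_apply, IncidenceAlgebra.zero_apply]
  simp [eI_apply, Ne.symm hxu, Ne.symm hxv]

lemma lie_ex_exy {x y : X} (h : x < y) :
    ⁅eI K x x le_rfl, eI K x y h.le⁆ = eI K x y h.le := by
  ext a b hab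
  simp only [eI_lie_apply, eI_apply]
  rcases eq_or_ne x a with rfl | hxa
  · rcases eq_or_ne y b with rfl | hyb
    · simp [h.ne, h.ne']
    · simp [hyb, h.ne']
  · rcases eq_or_ne y b with rfl | hyb
    · simp [hxa, h.ne]
    · simp [hxa, hyb]

lemma lie_exy_ey {x y : X} (h : x < y) :
    ⁅eI K x y h.le, eI K y y le_rfl⁆ = eI K x y h.le := by
  ext a b hab
  simp only [eI_lie_apply, eI_apply]
  rcases eq_or_ne x a with rfl | hxa
  · rcases eq_or_ne y b with rfl | hyb
    · simp [h.ne']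
    · simp [hyb]
  · rcases eq_or_ne y b with rfl | hyb
    · simp [hxa, h.ne']
    · simp [hxa, hyb]

section Phi

variable [CharZero K] {φ : IncidenceAlgebra K X →ₗ[K] IncidenceAlgebra K X}

/-- (i): diagonal entries of `φ(e_x)` agree along comparable pairs avoiding `x`. -/
lemma keyA (hφ : IsHalfDerivation K (IncidenceAlgebra K X) φ) {x u v : X}
    (hxu : x ≠ u) (hxv : x ≠ v) (huv : u ≤ v) :
    φ (eI K x x le_rfl) u u = φ (eI K x x le_rfl) v v := by
  have h := hφ (eI K x x le_rfl) (eI K u v huv)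
  rw [lie_eI_eI_eq_zero hxu hxv, map_zero] at h
  have h2 := congrFun (DFunLike.congr_fun h u) v
  simp only [IncidenceAlgebra.zero_apply, IncidenceAlgebra.constSMul_apply,
    IncidenceAlgebra.add_apply, lie_eI_apply, eI_lie_apply, smul_eq_mul, eq_self_iff_true, if_true,
    if_neg hxu, if_neg hxv] at h2
  linear_combination -2 * h2

/-- (B): `φ(e_{uv})(u,v) = φ(e_u)(u,u) - φ(e_u)(v,v)`. -/
lemma keyB (hφ : IsHalfDerivation K (IncidenceAlgebra K X) φ) {u v : X} (h : u < v) :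
    φ (eI K u v h.le) u v
      = φ (eI K u u le_rfl) u u - φ (eI K u u le_rfl) v v := by
  have H := hφ (eI K u u le_rfl) (eI K u v h.le)
  rw [lie_ex_exy h] at H
  have h2 := congrFun (DFunLike.congr_fun H u) v
  simp only [IncidenceAlgebra.constSMul_apply, IncidenceAlgebra.add_apply,
    lie_eI_apply, eI_lie_apply, smul_eq_mul, eq_self_iff_true, if_true, if_neg h.ne,
    if_neg h.ne'] at h2
  linear_combination 2 * h2

/-- (C): `φ(e_{uv})(u,v) = φ(e_v)(v,v) - φ(e_v)(u,u)`. -/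
lemma keyC (hφ : IsHalfDerivation K (IncidenceAlgebra K X) φ) {u v : X} (h : u < v) :
    φ (eI K u v h.le) u v
      = φ (eI K v v le_rfl) v v - φ (eI K v v le_rfl) u u := by
  have H := hφ (eI K u v h.le) (eI K v v le_rfl)
  rw [lie_exy_ey h] at H
  have h2 := congrFun (DFunLike.congr_fun H u) v
  simp only [IncidenceAlgebra.constSMul_apply, IncidenceAlgebra.add_apply,
    lie_eI_apply, eI_lie_apply, smul_eq_mul, eq_self_iff_true, if_true, if_neg h.ne'] at h2
  linear_combination 2 * h2

/-- (D): `φ(e_u)(u,v) = -φ(e_v)(u,v)` for `u < v`. -/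
lemma keyD (hφ : IsHalfDerivation K (IncidenceAlgebra K X) φ) {u v : X} (h : u < v) :
    φ (eI K u u le_rfl) u v = -φ (eI K v v le_rfl) u v := by
  have H := hφ (eI K u u le_rfl) (eI K v v le_rfl)
  rw [lie_eI_eI_eq_zero h.ne h.ne le_rfl, map_zero] at H
  have h2 := congrFun (DFunLike.congr_fun H u) v
  simp only [IncidenceAlgebra.zero_apply, IncidenceAlgebra.constSMul_apply,
    IncidenceAlgebra.add_apply, lie_eI_apply, eI_lie_apply, smul_eq_mul, eq_self_iff_true, if_true,
    if_neg h.ne, if_neg h.ne'] at h2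
  linear_combination -2 * h2

/-- off-diagonal vanishing when `x ∉ {u, v}`. -/
lemma keyOff (hφ : IsHalfDerivation K (IncidenceAlgebra K X) φ) {x u v : X}
    (hxu : x ≠ u) (hxv : x ≠ v) (h : u < v) :
    φ (eI K x x le_rfl) u v = 0 := by
  have H := hφ (eI K x x le_rfl) (eI K v v le_rfl)
  rw [lie_eI_eI_eq_zero hxv hxv le_rfl, map_zero] at H
  have h2 := congrFun (DFunLike.congr_fun H u) v
  simp only [IncidenceAlgebra.zero_apply, IncidenceAlgebra.constSMul_apply,
    IncidenceAlgebra.add_apply, lie_eI_apply, eI_lie_apply, smul_eq_mul, eq_self_iff_true, if_true,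
    if_neg hxu, if_neg hxv, if_neg h.ne'] at h2
  linear_combination -2 * h2

/-- if `u` is not minimal then `φ(e_u)(u,v) = 0`. -/
lemma keyMin (hφ : IsHalfDerivation K (IncidenceAlgebra K X) φ) {w u v : X}
    (hwu : w < u) (huv : u < v) :
    φ (eI K u u le_rfl) u v = 0 := by
  have hwv : w < v := hwu.trans huv
  -- step 1 : φ(e_{wu})(w,v) = -φ(e_w)(u,v) = 0
  have step1 : φ (eI K w u hwu.le) w v = 0 := by
    have H := hφ (eI K w w le_rfl) (eI K w u hwu.le)
    rw [lie_ex_exy hwu] at H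
    have h2 := congrFun (DFunLike.congr_fun H w) v
    have hoff : φ (eI K w w le_rfl) u v = 0 := keyOff hφ hwu.ne hwv.ne huv
    simp only [IncidenceAlgebra.constSMul_apply, IncidenceAlgebra.add_apply,
      lie_eI_apply, eI_lie_apply, smul_eq_mul, eq_self_iff_true, if_true,
      if_neg huv.ne, if_neg hwv.ne] at h2
    rw [hoff] at h2
    linear_combination 2 * h2
  -- step 2 : φ(e_{wu})(w,v) = (1/2) φ(e_u)(u,v)
  have H := hφ (eI K w u hwu.le) (eI K u u le_rfl)
  rw [lie_exy_ey hwu] at H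
  have h2 := congrFun (DFunLike.congr_fun H w) v
  simp only [IncidenceAlgebra.constSMul_apply, IncidenceAlgebra.add_apply,
    lie_eI_apply, eI_lie_apply, smul_eq_mul, eq_self_iff_true, if_true,
    if_neg huv.ne, if_neg hwu.ne'] at h2
  rw [step1] at h2
  linear_combination -2 * h2

/-- if `v` is not maximal then `φ(e_v)(u,v) = 0`. -/
lemma keyMax (hφ : IsHalfDerivation K (IncidenceAlgebra K X) φ) {u v t : X}
    (huv : u < v) (hvt : v < t) :
    φ (eI K v v le_rfl) u v = 0 := by
  have hut : u < t := huv.trans hvt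
  -- step 1 : φ(e_{vt})(u,t) = 0
  have step1 : φ (eI K v t hvt.le) u t = 0 := by
    have H := hφ (eI K v t hvt.le) (eI K t t le_rfl)
    rw [lie_exy_ey hvt] at H
    have h2 := congrFun (DFunLike.congr_fun H u) t
    have hoff : φ (eI K t t le_rfl) u v = 0 := keyOff hφ hut.ne' hvt.ne' huv
    simp only [IncidenceAlgebra.constSMul_apply, IncidenceAlgebra.add_apply,
      lie_eI_apply, eI_lie_apply, smul_eq_mul, eq_self_iff_true, if_true,
      if_neg huv.ne', if_neg hut.ne'] at h2
    rw [hoff] at h2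
    linear_combination 2 * h2
  -- step 2 : φ(e_{vt})(u,t) = (1/2) φ(e_v)(u,v)
  have H := hφ (eI K v v le_rfl) (eI K v t hvt.le)
  rw [lie_ex_exy hvt] at H
  have h2 := congrFun (DFunLike.congr_fun H u) t
  simp only [IncidenceAlgebra.constSMul_apply, IncidenceAlgebra.add_apply,
    lie_eI_apply, eI_lie_apply, smul_eq_mul, eq_self_iff_true, if_true,
    if_neg huv.ne', if_neg hvt.ne] at h2
  rw [step1] at h2
  linear_combination -2 * h2

lemma keyA' (hφ : IsHalfDerivation K (IncidenceAlgebra K X) φ) {x u v : X}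
    (hxu : x ≠ u) (hxv : x ≠ v) (huv : u ≤ v ∨ v ≤ u) :
    φ (eI K x x le_rfl) u u = φ (eI K x x le_rfl) v v := by
  rcases huv with h | h
  · exact keyA hφ hxu hxv h
  · exact (keyA hφ hxv hxu h).symm

/-- share first element -/
lemma shareFirst (hφ : IsHalfDerivation K (IncidenceAlgebra K X) φ) {x y v : X}
    (hxy : x < y) (hxv : x < v) (hc : y ≤ v ∨ v ≤ y) :
    φ (eI K x y hxy.le) x y = φ (eI K x v hxv.le) x v := by
  rw [keyB hφ hxy, keyB hφ hxv, keyA' hφ hxy.ne hxv.ne hc]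

/-- share second element -/
lemma shareSecond (hφ : IsHalfDerivation K (IncidenceAlgebra K X) φ) {x u y : X}
    (hxy : x < y) (huy : u < y) (hc : x ≤ u ∨ u ≤ x) :
    φ (eI K x y hxy.le) x y = φ (eI K u y huy.le) u y := by
  rw [keyC hφ hxy, keyC hφ huy, keyA' hφ hxy.ne' huy.ne' hc]

/-- adjacent in a chain -/
lemma chainStep (hφ : IsHalfDerivation K (IncidenceAlgebra K X) φ) {x y v : X}
    (hxy : x < y) (hyv : y < v) :
    φ (eI K x y hxy.le) x y = φ (eI K y v hyv.le) y v := by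
  rw [keyC hφ hxy, keyB hφ hyv, keyA' hφ hxy.ne' hyv.ne (Or.inl (hxy.trans hyv).le)]

end Phi

end Statement8Aux

open Statement8Aux in
/-- the four coefficient identities for a `1/2`-derivation `φ` of
`I(X,K)` over a finite connected poset. -/
theorem statement8 (K X : Type*) [Field K] [CharZero K] [PartialOrder X] [Fintype X]
    [LocallyFiniteOrder X] [DecidableEq X] (hconn : ConnectedPoset X)
    (φ : IncidenceAlgebra K X →ₗ[K] IncidenceAlgebra K X)
    (hφ : IsHalfDerivation K (IncidenceAlgebra K X) φ) :
    (∀ x u v : X, u ≤ v → x ≠ u → x ≠ v →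
        φ (eI K x x le_rfl) u u = φ (eI K x x le_rfl) v v) ∧
    (∀ (x y u v : X) (h1 : x < y) (h2 : u < v),
        (x ≤ u ∨ u ≤ x) → (x ≤ v ∨ v ≤ x) → (y ≤ u ∨ u ≤ y) → (y ≤ v ∨ v ≤ y) →
        φ (eI K x y h1.le) x y = φ (eI K u v h2.le) u v) ∧
    (∀ x u v : X, u < v →
        ¬((x = u ∧ IsMin u ∧ IsMax v) ∨ (x = v ∧ IsMin u ∧ IsMax v)) →
        φ (eI K x x le_rfl) u v = 0) ∧
    (∀ x y : X, IsMin x → IsMax y → x < y →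
        φ (eI K x x le_rfl) x y = -φ (eI K y y le_rfl) x y) := by
  refine ⟨fun x u v huv hxu hxv => keyA hφ hxu hxv huv, ?_, ?_, ?_⟩
  · -- (ii)
    intro x y u v h1 h2 hxu hxv hyu hyv
    by_cases exu : x = u
    · subst exu
      exact shareFirst hφ h1 h2 hyv
    · by_cases eyv : y = v
      · subst eyv
        exact shareSecond hφ h1 h2 hxu
      · by_cases eyu : y = u
        · subst eyu
          exact chainStep hφ h1 h2
        · by_cases exv : x = v
          · subst exv
            exact (chainStep hφ h2 h1).symm
          · -- all distinct; use comparability of x and u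
            rcases hxu with hle | hle
            · have hxu' : x < u := lt_of_le_of_ne hle exu
              calc φ (eI K x y h1.le) x y
                  = φ (eI K x u hxu'.le) x u := shareFirst hφ h1 hxu' hyu
                _ = φ (eI K u v h2.le) u v := chainStep hφ hxu' h2
            · have hux : u < x := lt_of_le_of_ne hle (Ne.symm exu)
              calc φ (eI K x y h1.le) x y
                  = φ (eI K u x hux.le) u x := (chainStep hφ hux h1).symm
                _ = φ (eI K u v h2.le) u v := shareFirst hφ hux h2 hxv
  · -- (iii)
    intro x u v huv hcond
    by_cases exu : x = u
    · subst exu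
      have h' : ¬(IsMin x ∧ IsMax v) := fun hc => hcond (Or.inl ⟨rfl, hc⟩)
      by_cases hmin : IsMin x
      · have hmax : ¬ IsMax v := fun hc => h' ⟨hmin, hc⟩
        rcases not_isMax_iff.1 hmax with ⟨t, hvt⟩
        rw [keyD hφ huv, keyMax hφ huv hvt, neg_zero]
      · rcases not_isMin_iff.1 hmin with ⟨w, hwx⟩
        exact keyMin hφ hwx huv
    · by_cases exv : x = v
      · subst exv
        have h' : ¬(IsMin u ∧ IsMax x) := fun hc => hcond (Or.inr ⟨rfl, hc⟩)
        by_cases hmax : IsMax x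
        · have hmin : ¬ IsMin u := fun hc => h' ⟨hc, hmax⟩
          rcases not_isMin_iff.1 hmin with ⟨w, hwu⟩
          have := keyD hφ huv
          rw [keyMin hφ hwu huv] at this
          linear_combination this
        · rcases not_isMax_iff.1 hmax with ⟨t, hxt⟩
          exact keyMax hφ huv hxt
      · exact keyOff hφ exu exv huv
  · -- (iv)
    intro x y _ _ hxy
    exact keyD hφ hxy
end
end

section
/- Let K be a field of characteristic zero, X a finite connected poset, and φ ∈ Δ(I(X,K)). Define c ∈ I(X,K) by c(x,y) = φ(e_y)(x,y) if x ∈ Min(X), y ∈ Max(X) and x < y, and c(x,y) = 0 otherwise. Then c ∈ Z([I(X,K),I(X,K)]), and for all x < y one has ad_c(e_{xy}) = 0 and ad_c(e_x) = φ(e_x)_J, the component of φ(e_x) in span{e_{uv} : u < v}. -/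
open scoped Classical

attribute [local instance 100] LieRing.ofAssociativeRing

noncomputable section

/-- The derived subalgebra `[L, L]` (the span of all brackets), as a `K`-submodule. -/
def derivedSpan (K L : Type*) [Field K] [LieRing L] [LieAlgebra K L] : Submodule K L :=
  Submodule.span K {z : L | ∃ a b : L, z = ⁅a, b⁆}

namespace Statement10Aux

open Finset IncidenceAlgebra

variable {K X : Type*} [Field K] [CharZero K] [PartialOrder X]
  [LocallyFiniteOrder X] [DecidableEq X]

lemma eI_apply (x y : X) (h : x ≤ y) (u v : X) :
    eI K x y h u v = if x = u ∧ y = v then (1 : K) else 0 := rfl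

lemma mul_eI_apply (f : IncidenceAlgebra K X) (x y : X) (h : x ≤ y) (u v : X) :
    (f * eI K x y h) u v = if y = v then f u x else 0 := by
  rw [mul_apply]
  have hterm : ∀ z ∈ Icc u v, f u z * eI K x y h z v
      = if x = z then (if y = v then f u z else 0) else 0 := by
    intro z _
    rw [eI_apply, ← ite_and]
    split_ifs with h1 h2 h3 <;> simp_all
  rw [Finset.sum_congr rfl hterm, Finset.sum_ite_eq]
  by_cases h1 : x ∈ Icc u v
  · rw [if_pos h1]
  · rw [if_neg h1]
    by_cases h2 : y = v
    · rw [if_pos h2]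
      subst h2
      rw [mem_Icc, not_and] at h1
      by_cases hux : u ≤ x
      · exact absurd h (h1 hux)
      · exact (apply_eq_zero_of_not_le hux f).symm
    · rw [if_neg h2]

lemma eI_mul_apply (f : IncidenceAlgebra K X) (x y : X) (h : x ≤ y) (u v : X) :
    (eI K x y h * f) u v = if x = u then f y v else 0 := by
  rw [mul_apply]
  have hterm : ∀ z ∈ Icc u v, eI K x y h u z * f z v
      = if y = z then (if x = u then f z v else 0) else 0 := by
    intro z _
    rw [eI_apply, ← ite_and]
    split_ifs with h1 h2 h3 <;> simp_all [And.comm]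
  rw [Finset.sum_congr rfl hterm, Finset.sum_ite_eq]
  by_cases h1 : y ∈ Icc u v
  · rw [if_pos h1]
  · rw [if_neg h1]
    by_cases h2 : x = u
    · rw [if_pos h2]
      rw [mem_Icc, not_and] at h1
      have huy : u ≤ y := le_of_eq_of_le h2.symm h
      exact (apply_eq_zero_of_not_le (h1 huy) f).symm
    · rw [if_neg h2]

lemma lie_eI (f : IncidenceAlgebra K X) (x y : X) (h : x ≤ y) (u v : X) :
    ⁅f, eI K x y h⁆ u v
      = (if y = v then f u x else 0) - (if x = u then f y v else 0) := by
  rw [Ring.lie_def, IncidenceAlgebra.sub_apply, mul_eI_apply, eI_mul_apply]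

lemma eI_lie (f : IncidenceAlgebra K X) (x y : X) (h : x ≤ y) (u v : X) :
    ⁅eI K x y h, f⁆ u v
      = (if x = u then f y v else 0) - (if y = v then f u x else 0) := by
  rw [Ring.lie_def, IncidenceAlgebra.sub_apply, mul_eI_apply, eI_mul_apply]

lemma br0 {x y : X} (hxy : x ≠ y) :
    ⁅eI K x x le_rfl, eI K y y le_rfl⁆ = (0 : IncidenceAlgebra K X) := by
  ext u v _
  rw [eI_lie, IncidenceAlgebra.zero_apply, eI_apply, eI_apply]
  have h1 : (if y = x ∧ y = v then (1 : K) else 0) = 0 :=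
    if_neg fun hh => hxy hh.1.symm
  have h2 : (if y = u ∧ y = x then (1 : K) else 0) = 0 :=
    if_neg fun hh => hxy hh.2.symm
  rw [h1, h2, ite_self, ite_self, sub_self]

lemma br1 {x y : X} (hxy : x ≠ y) (h : x ≤ y) :
    ⁅eI K x x le_rfl, eI K x y h⁆ = eI K x y h := by
  ext u v _
  rw [eI_lie, eI_apply, eI_apply, eI_apply]
  have h2 : (if x = u ∧ y = x then (1 : K) else 0) = 0 :=
    if_neg fun hh => hxy hh.2.symm
  have h3 : (if x = x ∧ y = v then (1 : K) else 0) = if y = v then (1 : K) else 0 := by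
    simp
  rw [h2, ite_self, sub_zero, h3, ite_and]

lemma br2 {x y : X} (hxy : x ≠ y) (h : x ≤ y) :
    ⁅eI K y y le_rfl, eI K x y h⁆ = -eI K x y h := by
  ext u v _
  rw [eI_lie, IncidenceAlgebra.neg_apply, eI_apply, eI_apply, eI_apply]
  have h1 : (if x = y ∧ y = v then (1 : K) else 0) = 0 :=
    if_neg fun hh => hxy hh.1
  have h2 : (if x = u ∧ y = y then (1 : K) else 0) = if x = u then (1 : K) else 0 := by
    simp
  rw [h1, h2, ite_self, zero_sub]
  by_cases hy : y = v <;> by_cases hx : x = u <;> simp [hy, hx]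

variable (φ : IncidenceAlgebra K X →ₗ[K] IncidenceAlgebra K X)
  (hφ : IsHalfDerivation K (IncidenceAlgebra K X) φ)

include hφ

lemma factA (x y : X) (hxy : x ≠ y) :
    ⁅φ (eI K x x le_rfl), eI K y y le_rfl⁆
      + ⁅eI K x x le_rfl, φ (eI K y y le_rfl)⁆ = 0 := by
  have e := hφ (eI K x x le_rfl) (eI K y y le_rfl)
  rw [br0 hxy, map_zero] at e
  have h2 : (2 : K) ≠ 0 := two_ne_zero
  have := congrArg (fun z : IncidenceAlgebra K X => (2 : K) • z) e
  simpa [smul_smul, mul_inv_cancel₀ h2] using this.symm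

lemma L1 (x u v : X) (hxu : x ≠ u) (hxv : x ≠ v) (huv : u ≠ v) :
    φ (eI K x x le_rfl) u v = 0 := by
  have hA := factA φ hφ x v hxv
  have h := congrArg (fun f : IncidenceAlgebra K X => f u v) hA
  simp only [IncidenceAlgebra.add_apply, IncidenceAlgebra.zero_apply, lie_eI, eI_lie, if_pos rfl,
    if_neg (Ne.symm huv), if_neg hxu, if_neg hxv, sub_zero, zero_sub, add_zero,
    add_neg_eq_zero, sub_self] at h
  simpa using h

lemma L2 (u v : X) (huv : u ≠ v) :
    φ (eI K u u le_rfl) u v + φ (eI K v v le_rfl) u v = 0 := by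
  have hA := factA φ hφ u v huv
  have h := congrArg (fun f : IncidenceAlgebra K X => f u v) hA
  simpa [lie_eI, eI_lie, if_neg (Ne.symm huv), if_neg huv] using h

lemma L3a (u v w : X) (huv : u < v) (hvw : v < w) :
    φ (eI K v v le_rfl) u v = 0 := by
  have huw : u < w := huv.trans hvw
  have h1 := hφ (eI K v v le_rfl) (eI K v w hvw.le)
  rw [br1 hvw.ne] at h1
  have h2 := hφ (eI K w w le_rfl) (eI K v w hvw.le)
  rw [br2 hvw.ne, map_neg] at h2
  have hC : φ (eI K w w le_rfl) u v = 0 := L1 φ hφ w u v huw.ne' hvw.ne' huv.ne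
  have e2 := congrArg (fun f : IncidenceAlgebra K X => f u w) h2
  simp only [IncidenceAlgebra.neg_apply, constSMul_apply, IncidenceAlgebra.add_apply, lie_eI, eI_lie, if_pos rfl,
    if_neg huv.ne', if_neg huw.ne', hC, smul_eq_mul, zero_sub, sub_zero, zero_add, ite_true] at e2
  have ht : φ (eI K v w hvw.le) u w = 0 := by linear_combination (-2 : K) * e2
  have e1 := congrArg (fun f : IncidenceAlgebra K X => f u w) h1
  simp only [constSMul_apply, IncidenceAlgebra.add_apply, lie_eI, eI_lie, if_pos rfl,
    if_neg huv.ne', if_neg (show v ≠ u from huv.ne'), if_neg hvw.ne, smul_eq_mul,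
    sub_zero, zero_sub, add_zero, ht, ite_true] at e1
  linear_combination (-2 : K) * e1

lemma L3b (t u v : X) (htu : t < u) (huv : u < v) :
    φ (eI K u u le_rfl) u v = 0 := by
  have htv : t < v := htu.trans huv
  have h1 := hφ (eI K u u le_rfl) (eI K t u htu.le)
  rw [br2 htu.ne, map_neg] at h1
  have h2 := hφ (eI K t t le_rfl) (eI K t u htu.le)
  rw [br1 htu.ne] at h2
  have hC : φ (eI K t t le_rfl) u v = 0 := L1 φ hφ t u v htu.ne htv.ne huv.ne
  have e2 := congrArg (fun f : IncidenceAlgebra K X => f t v) h2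
  simp only [constSMul_apply, IncidenceAlgebra.add_apply, lie_eI, eI_lie, if_pos rfl,
    if_neg huv.ne, if_neg htv.ne, if_neg htu.ne', hC, smul_eq_mul,
    zero_sub, sub_zero, zero_add, neg_zero, add_zero, ite_true] at e2
  have hs : φ (eI K t u htu.le) t v = 0 := by linear_combination (2 : K) * e2
  have e1 := congrArg (fun f : IncidenceAlgebra K X => f t v) h1
  simp only [IncidenceAlgebra.neg_apply, constSMul_apply, IncidenceAlgebra.add_apply, lie_eI, eI_lie, if_pos rfl,
    if_neg huv.ne, if_neg htu.ne', hs, smul_eq_mul, zero_sub, sub_zero, add_zero,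
    neg_zero, zero_add, ite_true] at e1
  linear_combination (2 : K) * e1

end Statement10Aux

namespace Statement10Aux

variable {K X : Type*} [Field K] [PartialOrder X]
  [LocallyFiniteOrder X] [DecidableEq X]

lemma isum_apply {ι : Type*} (s : Finset ι) (f : ι → IncidenceAlgebra K X) (a b : X) :
    (∑ i ∈ s, f i) a b = ∑ i ∈ s, f i a b := by
  induction s using Finset.induction with
  | empty => simp [IncidenceAlgebra.zero_apply]
  | insert _ _ h ih =>
      rw [Finset.sum_insert h, Finset.sum_insert h, IncidenceAlgebra.add_apply, ih]

lemma lie_diag (a b : IncidenceAlgebra K X) (u : X) : ⁅a, b⁆ u u = 0 := by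
  rw [Ring.lie_def, IncidenceAlgebra.sub_apply, IncidenceAlgebra.mul_apply,
    IncidenceAlgebra.mul_apply, Finset.Icc_self,
    Finset.sum_singleton, Finset.sum_singleton, mul_comm, sub_self]

end Statement10Aux

open Statement10Aux Finset IncidenceAlgebra in
/-- let `c` be defined by `c(x,y) = φ(e_y)(x,y)` for `x ∈ Min X`,
`y ∈ Max X`, `x < y`, and `0` otherwise.  Then `c ∈ Z([I(X,K), I(X,K)])`,
`ad_c e_{xy} = 0` for `x < y`, and `ad_c e_x = (φ e_x)_J`. -/
theorem statement10 (K X : Type*) [Field K] [CharZero K] [PartialOrder X] [Fintype X]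
    [LocallyFiniteOrder X] [DecidableEq X] (hconn : ConnectedPoset X)
    (φ : IncidenceAlgebra K X →ₗ[K] IncidenceAlgebra K X)
    (hφ : IsHalfDerivation K (IncidenceAlgebra K X) φ)
    (c : IncidenceAlgebra K X)
    (hc : ∀ x y : X, c x y =
      if IsMin x ∧ IsMax y ∧ x < y then φ (eI K y y le_rfl) x y else 0) :
    (c ∈ derivedSpan K (IncidenceAlgebra K X) ∧
      ∀ f ∈ derivedSpan K (IncidenceAlgebra K X), ⁅c, f⁆ = 0) ∧
    (∀ (x y : X) (hxy : x < y), ⁅c, eI K x y hxy.le⁆ = 0) ∧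
    (∀ x u v : X, ⁅c, eI K x x le_rfl⁆ u v =
      if u = v then 0 else φ (eI K x x le_rfl) u v) := by
  -- c u v = φ(e_v)(u,v) whenever u ≠ v
  have hCU : ∀ u v : X, u ≠ v → c u v = φ (eI K v v le_rfl) u v := by
    intro u v huv
    rw [hc]
    by_cases hcond : IsMin u ∧ IsMax v ∧ u < v
    · rw [if_pos hcond]
    · rw [if_neg hcond]
      by_cases hle : u ≤ v
      · have hlt : u < v := hle.lt_of_ne huv
        by_cases hmax : IsMax v
        · have hmin : ¬IsMin u := fun hmin => hcond ⟨hmin, hmax, hlt⟩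
          obtain ⟨t, htu⟩ := not_isMin_iff.mp hmin
          have h1 : φ (eI K u u le_rfl) u v = 0 := L3b φ hφ t u v htu hlt
          have h2 := L2 φ hφ u v huv
          rw [h1, zero_add] at h2
          exact h2.symm
        · obtain ⟨w, hvw⟩ := not_isMax_iff.mp hmax
          exact (L3a φ hφ u v w hlt hvw).symm
      · exact (apply_eq_zero_of_not_le hle _).symm
  -- centralizer lemma: c brackets to zero with anything of zero diagonal
  have hZ : ∀ f : IncidenceAlgebra K X, (∀ u, f u u = 0) → ⁅c, f⁆ = 0 := by
    intro f hf
    ext u v _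
    rw [Ring.lie_def, IncidenceAlgebra.sub_apply, mul_apply, mul_apply, ← Finset.sum_sub_distrib,
      IncidenceAlgebra.zero_apply]
    apply Finset.sum_eq_zero
    intro z hz
    obtain ⟨huz, hzv⟩ := Finset.mem_Icc.mp hz
    have h1 : c u z * f z v = 0 := by
      rw [hc u z]
      split_ifs with hcnd
      · obtain ⟨-, hmax, -⟩ := hcnd
        have : z = v := le_antisymm hzv (hmax hzv)
        subst this
        rw [hf, mul_zero]
      · rw [zero_mul]
    have h2 : f u z * c z v = 0 := by
      rw [hc z v]
      split_ifs with hcnd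
      · obtain ⟨hmin, -, -⟩ := hcnd
        have : z = u := le_antisymm (hmin huz) huz
        subst this
        rw [hf, zero_mul]
      · rw [mul_zero]
    rw [h1, h2, sub_self]
  refine ⟨⟨?_, ?_⟩, ?_, ?_⟩
  · -- c ∈ derivedSpan
    have hrep : c = ∑ p ∈ (Finset.univ ×ˢ Finset.univ : Finset (X × X)),
        (if h : p.1 < p.2 then c p.1 p.2 • eI K p.1 p.2 h.le else 0) := by
      ext a b _
      rw [isum_apply, Finset.sum_eq_single (a, b)]
      · by_cases h : a < b
        · rw [dif_pos h, constSMul_apply, eI_apply, if_pos ⟨rfl, rfl⟩,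
            smul_eq_mul, mul_one]
        · rw [dif_neg h, hc, if_neg (fun hcon => h hcon.2.2), IncidenceAlgebra.zero_apply]
      · intro p _ hne
        by_cases hp : p.1 < p.2
        · rw [dif_pos hp, constSMul_apply, eI_apply, if_neg, smul_zero]
          rintro ⟨h1, h2⟩
          exact hne (Prod.ext h1 h2)
        · rw [dif_neg hp, IncidenceAlgebra.zero_apply]
      · intro habs
        exact absurd (Finset.mem_product.mpr ⟨Finset.mem_univ _, Finset.mem_univ _⟩) habs
    rw [hrep]
    apply Submodule.sum_mem
    intro p _
    by_cases h : p.1 < p.2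
    · rw [dif_pos h]
      exact Submodule.smul_mem _ _ (Submodule.subset_span
        ⟨eI K p.1 p.1 le_rfl, eI K p.1 p.2 h.le, (br1 h.ne h.le).symm⟩)
    · rw [dif_neg h]
      exact Submodule.zero_mem _
  · -- centrality
    intro f hf
    have hle : derivedSpan K (IncidenceAlgebra K X) ≤
        LinearMap.ker (LinearMap.mulLeft K c - LinearMap.mulRight K c) := by
      rw [derivedSpan, Submodule.span_le]
      rintro z ⟨a, b, rfl⟩
      rw [SetLike.mem_coe, LinearMap.mem_ker, LinearMap.sub_apply,
        LinearMap.mulLeft_apply, LinearMap.mulRight_apply, ← Ring.lie_def]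
      exact hZ _ (lie_diag a b)
    have hker := hle hf
    rw [LinearMap.mem_ker, LinearMap.sub_apply, LinearMap.mulLeft_apply,
      LinearMap.mulRight_apply, ← Ring.lie_def] at hker
    exact hker
  · -- ad_c e_{xy} = 0 for x < y
    intro x y hxy
    have hZe : ∀ u, eI K x y hxy.le u u = 0 := by
      intro u
      rw [eI_apply, if_neg]
      rintro ⟨rfl, rfl⟩
      exact hxy.ne rfl
    exact hZ _ hZe
  · -- ad_c e_x = (φ e_x)_J
    intro x u v
    rw [lie_eI]
    by_cases huv : u = v
    · subst huv
      rw [if_pos rfl]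
      by_cases hx : x = u
      · subst hx
        rw [if_pos rfl]
        exact sub_self _
      · rw [if_neg hx, if_neg hx]
        exact sub_self _
    · rw [if_neg huv]
      by_cases hxv : x = v
      · subst hxv
        rw [if_pos rfl, if_neg (fun h : x = u => huv h.symm), hCU u x huv, sub_zero]
      · by_cases hxu : x = u
        · subst hxu
          rw [if_neg hxv, if_pos rfl, hCU x v huv, zero_sub]
          have h2 := L2 φ hφ x v huv
          linear_combination -h2
        · rw [if_neg hxu, if_neg hxv, sub_self,
            L1 φ hφ x u v (fun h => hxu h) (fun h => hxv h) huv]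
end
end

section
/- Let K be a field of characteristic zero and X a finite connected poset. Each φ ∈ Δ(I(X,K)) can be written as φ = ad_c + φ̃ for a unique c ∈ Z([I(X,K),I(X,K)]) and a unique diagonality-preserving φ̃ ∈ Δ(I(X,K)). -/
open scoped Classical

attribute [local instance 100] LieRing.ofAssociativeRing

noncomputable section

/-- Diagonal elements of the incidence algebra (the subspace `D(X,K)`). -/
def IsDiagI {K X : Type*} [Zero K] [LE X] (f : IncidenceAlgebra K X) : Prop :=
  ∀ x y : X, x ≠ y → f x y = 0

set_option linter.unusedSectionVars false
namespace S11
variable {K X : Type*} [Field K] [CharZero K] [PartialOrder X] [Fintype X]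
  [LocallyFiniteOrder X] [DecidableEq X]

lemma eI_apply (x y : X) (h : x ≤ y) (u v : X) :
    eI K x y h u v = if x = u ∧ y = v then 1 else 0 := rfl

lemma mul_eI_apply (f : IncidenceAlgebra K X) (x y : X) (h : x ≤ y) (u v : X) :
    (f * eI K x y h) u v = if y = v then f u x else 0 := by
  rw [IncidenceAlgebra.mul_apply]
  have : ∀ z ∈ Finset.Icc u v, f u z * eI K x y h z v
      = if x = z then (if y = v then f u x else 0) else 0 := by
    intro z _
    rw [eI_apply]
    by_cases h1 : x = z
    · subst h1
      by_cases h2 : y = v <;> simp [h2]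
    · simp [h1]
  rw [Finset.sum_congr rfl this, Finset.sum_ite_eq (Finset.Icc u v) x
    (fun _ => if y = v then f u x else 0)]
  by_cases hx : x ∈ Finset.Icc u v
  · rw [if_pos hx]
  · rw [if_neg hx]
    by_cases h2 : y = v
    · subst h2
      rw [if_pos rfl]
      rw [Finset.mem_Icc, not_and_or] at hx
      rcases hx with hx | hx
    -- ¬ u ≤ x : f u x = 0 ;  ¬ x ≤ v=y : contradiction with h
      · exact (IncidenceAlgebra.apply_eq_zero_of_not_le hx f).symm
      · exact absurd h hx
    · rw [if_neg h2]

lemma eI_mul_apply (f : IncidenceAlgebra K X) (x y : X) (h : x ≤ y) (u v : X) :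
    (eI K x y h * f) u v = if x = u then f y v else 0 := by
  rw [IncidenceAlgebra.mul_apply]
  have : ∀ z ∈ Finset.Icc u v, eI K x y h u z * f z v
      = if y = z then (if x = u then f y v else 0) else 0 := by
    intro z _
    rw [eI_apply]
    by_cases h1 : y = z
    · subst h1
      by_cases h2 : x = u <;> simp [h2]
    · rw [if_neg (fun hx : x = u ∧ y = z => h1 hx.2), if_neg h1, zero_mul]
  rw [Finset.sum_congr rfl this, Finset.sum_ite_eq (Finset.Icc u v) y
    (fun _ => if x = u then f y v else 0)]
  by_cases hy : y ∈ Finset.Icc u v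
  · rw [if_pos hy]
  · rw [if_neg hy]
    by_cases h2 : x = u
    · subst h2
      rw [if_pos rfl]
      rw [Finset.mem_Icc, not_and_or] at hy
      rcases hy with hy | hy
      · exact absurd h hy
      · exact (IncidenceAlgebra.apply_eq_zero_of_not_le hy f).symm
    · rw [if_neg h2]

lemma lie_eI_apply (f : IncidenceAlgebra K X) (x y : X) (h : x ≤ y) (u v : X) :
    ⁅f, eI K x y h⁆ u v = (if y = v then f u x else 0) - (if x = u then f y v else 0) := by
  rw [Ring.lie_def, IncidenceAlgebra.sub_apply, mul_eI_apply, eI_mul_apply]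

lemma eI_lie_apply (f : IncidenceAlgebra K X) (x y : X) (h : x ≤ y) (u v : X) :
    ⁅eI K x y h, f⁆ u v = (if x = u then f y v else 0) - (if y = v then f u x else 0) := by
  rw [Ring.lie_def, IncidenceAlgebra.sub_apply, mul_eI_apply, eI_mul_apply]

/-- diagonal idempotent -/
def ee (K : Type*) {X : Type*} [Field K] [PartialOrder X] [DecidableEq X] (x : X) :
    IncidenceAlgebra K X := eI K x x le_rfl

lemma lie_ee_eq_zero (x y : X) (hxy : x ≠ y) : ⁅ee K x, ee K y⁆ = (0 : IncidenceAlgebra K X) := by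
  unfold ee
  apply IncidenceAlgebra.ext
  intro u v _
  rw [lie_eI_apply, IncidenceAlgebra.zero_apply, eI_apply, eI_apply]
  split_ifs <;> simp_all <;> grind

lemma lie_ee_eI (p q : X) (h : p ≤ q) (hpq : p ≠ q) :
    ⁅ee K p, eI K p q h⁆ = eI K p q h := by
  unfold ee
  apply IncidenceAlgebra.ext
  intro u v _
  rw [eI_lie_apply, eI_apply, eI_apply, eI_apply]
  split_ifs <;> simp_all <;> grind

lemma lie_eI_ee (p q : X) (h : p ≤ q) (hpq : p ≠ q) :
    ⁅eI K p q h, ee K q⁆ = eI K p q h := by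
  unfold ee
  apply IncidenceAlgebra.ext
  intro u v _
  rw [lie_eI_apply, eI_apply, eI_apply, eI_apply]
  split_ifs <;> simp_all <;> grind

lemma entry_eq {f g : IncidenceAlgebra K X} (h : f = g) (u v : X) : f u v = g u v := by rw [h]

lemma lie_ee_apply (f : IncidenceAlgebra K X) (x u v : X) :
    ⁅f, ee K x⁆ u v = (if x = v then f u x else 0) - (if x = u then f x v else 0) :=
  lie_eI_apply f x x le_rfl u v

lemma ee_lie_apply (f : IncidenceAlgebra K X) (x u v : X) :
    ⁅ee K x, f⁆ u v = (if x = u then f x v else 0) - (if x = v then f u x else 0) :=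
  eI_lie_apply f x x le_rfl u v

lemma halve {a : K} (h : a = 2⁻¹ * a) : a = 0 := by
  have h2 : (2:K) * a = 2 * (2⁻¹ * a) := congrArg _ h
  rw [← mul_assoc, mul_inv_cancel₀ (two_ne_zero), one_mul] at h2
  linear_combination h2

lemma unhalf {a b : K} (h : a = 2⁻¹ * b) (ha : a = 0) : b = 0 := by
  rw [ha] at h
  rcases mul_eq_zero.mp h.symm with h' | h'
  · exact absurd h' (inv_ne_zero two_ne_zero)
  · exact h'

variable (φ : IncidenceAlgebra K X →ₗ[K] IncidenceAlgebra K X)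
  (hφ : ∀ a b : IncidenceAlgebra K X, φ ⁅a, b⁆ = (2⁻¹ : K) • (⁅φ a, b⁆ + ⁅a, φ b⁆))

include hφ

lemma keyE (x y : X) (hxy : x ≠ y) :
    ⁅φ (ee K x), ee K y⁆ + ⁅ee K x, φ (ee K y)⁆ = 0 := by
  have h0 := hφ (ee K x) (ee K y)
  rw [lie_ee_eq_zero x y hxy, map_zero] at h0
  have h2 : (2⁻¹ : K) ≠ 0 := inv_ne_zero two_ne_zero
  exact (smul_eq_zero.mp h0.symm).resolve_left h2

lemma keyE' (x y : X) (hxy : x ≠ y) (p q : X) :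
    ((if y = q then φ (ee K x) p y else 0) - (if y = p then φ (ee K x) y q else 0))
    + ((if x = p then φ (ee K y) x q else 0) - (if x = q then φ (ee K y) p x else 0)) = 0 := by
  have h1 := entry_eq (keyE φ hφ x y hxy) p q
  rw [IncidenceAlgebra.add_apply, lie_ee_apply, ee_lie_apply, IncidenceAlgebra.zero_apply] at h1
  linear_combination h1

lemma C1 (x p q : X) (hxp : x ≠ p) (hxq : x ≠ q) (hpq : p ≠ q) : φ (ee K x) p q = 0 := by
  have := keyE' φ hφ x q hxq p q
  simpa [hxp, hxq, Ne.symm hpq, Ne.symm hxq] using this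

lemma C2 (x q : X) (hxq : x ≠ q) : φ (ee K x) x q = - φ (ee K q) x q := by
  have h1 := keyE' φ hφ x q hxq x q
  rw [if_pos rfl, if_neg (Ne.symm hxq), if_pos rfl, if_neg hxq] at h1
  linear_combination h1

/-- entries `φ(e_q) p q` vanish if `q` is not maximal -/
lemma L2 (p q r : X) (hpq : p < q) (hqr : q < r) : φ (ee K q) p q = 0 := by
  have hpq' : p ≠ q := hpq.ne
  have hpr : p ≠ r := (hpq.trans hqr).ne
  have hqr' : q ≠ r := hqr.ne
  -- step A : φ(e_{qr}) p r = 0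
  have hA : φ (eI K q r hqr.le) p r = 0 := by
    have h0 := hφ (eI K q r hqr.le) (ee K r)
    rw [lie_eI_ee q r hqr.le hqr'] at h0
    have h1 := entry_eq h0 p r
    rw [IncidenceAlgebra.constSMul_apply, IncidenceAlgebra.add_apply, lie_ee_apply,
      eI_lie_apply, smul_eq_mul] at h1
    rw [if_pos rfl, if_neg (Ne.symm hpr), if_neg (Ne.symm hpq'), if_pos rfl] at h1
    rw [C1 φ hφ r p q (Ne.symm hpr) (Ne.symm hqr') hpq'] at h1
    apply halve
    linear_combination h1
  -- step B
  have h0 := hφ (ee K q) (eI K q r hqr.le)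
  rw [lie_ee_eI q r hqr.le hqr'] at h0
  have h1 := entry_eq h0 p r
  rw [IncidenceAlgebra.constSMul_apply, IncidenceAlgebra.add_apply, lie_eI_apply,
    ee_lie_apply, smul_eq_mul] at h1
  rw [if_pos rfl, if_neg (Ne.symm hpq'), if_neg (Ne.symm hpq'), if_neg hqr'] at h1
  have h1' : φ (eI K q r hqr.le) p r = 2⁻¹ * φ (ee K q) p q := by linear_combination h1
  exact unhalf h1' hA

/-- entries `φ(e_q) p q` vanish if `p` is not minimal -/
lemma L3 (o p q : X) (hop : o < p) (hpq : p < q) : φ (ee K q) p q = 0 := by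
  have hop' : o ≠ p := hop.ne
  have hoq : o ≠ q := (hop.trans hpq).ne
  have hpq' : p ≠ q := hpq.ne
  -- step A : φ(e_{op}) o q = -½ φ(e_q) p q
  have hA : φ (eI K o p hop.le) o q = 2⁻¹ * (- φ (ee K q) p q) := by
    have h0 := hφ (eI K o p hop.le) (ee K p)
    rw [lie_eI_ee o p hop.le hop'] at h0
    have h1 := entry_eq h0 o q
    rw [IncidenceAlgebra.constSMul_apply, IncidenceAlgebra.add_apply, lie_ee_apply,
      eI_lie_apply, smul_eq_mul] at h1
    rw [if_neg hpq', if_neg (Ne.symm hop'), if_pos rfl, if_neg hpq'] at h1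
    rw [C2 φ hφ p q hpq'] at h1
    linear_combination h1
  -- step B : φ(e_{op}) o q = 0
  have hz : φ (eI K o p hop.le) o q = 0 := by
    have h0 := hφ (ee K o) (eI K o p hop.le)
    rw [lie_ee_eI o p hop.le hop'] at h0
    have h1 := entry_eq h0 o q
    rw [IncidenceAlgebra.constSMul_apply, IncidenceAlgebra.add_apply, lie_eI_apply,
      ee_lie_apply, smul_eq_mul] at h1
    rw [if_neg hpq', if_pos rfl, if_pos rfl, if_neg hoq] at h1
    rw [C1 φ hφ o p q hop' hoq hpq'] at h1
    apply halve
    linear_combination h1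
  have := unhalf hA hz
  linear_combination -this

end S11

namespace S11
variable {K X : Type*} [Field K] [CharZero K] [PartialOrder X] [Fintype X]
  [LocallyFiniteOrder X] [DecidableEq X]
set_option linter.unusedSectionVars false

/-- evaluation at an entry, as a linear map -/
def evalLM (u v : X) : IncidenceAlgebra K X →ₗ[K] K where
  toFun f := f u v
  map_add' f g := IncidenceAlgebra.add_apply f g u v
  map_smul' t f := by
    show (t • f) u v = (RingHom.id K) t • f u v
    rw [IncidenceAlgebra.constSMul_apply, RingHom.id_apply]

lemma evalLM_apply (u v : X) (f : IncidenceAlgebra K X) : evalLM u v f = f u v := rfl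

lemma sum_apply {ι : Type*} (s : Finset ι) (g : ι → IncidenceAlgebra K X) (u v : X) :
    (∑ i ∈ s, g i) u v = ∑ i ∈ s, g i u v := by
  rw [← evalLM_apply (K := K) u v, map_sum]
  rfl

lemma ee_diag (x : X) : IsDiagI (ee K x) := by
  intro u v huv
  unfold ee
  rw [eI_apply, if_neg]
  rintro ⟨rfl, rfl⟩; exact huv rfl

/-- every incidence element is the sum of its coordinates times basis elements -/
lemma eq_sum_eI (f : IncidenceAlgebra K X) :
    f = ∑ p : X, ∑ q : X, if h : p ≤ q then f p q • eI K p q h else 0 := by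
  apply IncidenceAlgebra.ext
  intro u v _
  have : ∀ p q : X,
      (if h : p ≤ q then f p q • eI K p q h else 0) u v
      = if p = u ∧ q = v then f u v else 0 := by
    intro p q
    by_cases h : p ≤ q
    · rw [dif_pos h, IncidenceAlgebra.constSMul_apply, eI_apply, smul_eq_mul]
      by_cases h2 : p = u ∧ q = v
      · obtain ⟨rfl, rfl⟩ := h2
        simp
      · rw [if_neg h2, if_neg h2, mul_zero]
    · rw [dif_neg h, IncidenceAlgebra.zero_apply]
      by_cases h2 : p = u ∧ q = v
      · obtain ⟨rfl, rfl⟩ := h2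
        rw [if_pos ⟨rfl, rfl⟩, IncidenceAlgebra.apply_eq_zero_of_not_le h f]
      · rw [if_neg h2]
  calc f u v = ∑ p : X, ∑ q : X, if p = u ∧ q = v then f u v else 0 := by
        rw [Finset.sum_comm]
        rw [Finset.sum_eq_single v]
        · rw [Finset.sum_eq_single u]
          · simp
          · intro p _ hp; rw [if_neg (fun hh => hp hh.1)]
          · intro h; exact absurd (Finset.mem_univ u) h
        · intro q _ hq
          apply Finset.sum_eq_zero
          intro p _; rw [if_neg (fun hh => hq hh.2)]
        · intro h; exact absurd (Finset.mem_univ v) h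
    _ = ∑ p : X, ∑ q : X, (if h : p ≤ q then f p q • eI K p q h else 0) u v := by
        apply Finset.sum_congr rfl; intro p _
        apply Finset.sum_congr rfl; intro q _
        rw [this p q]
    _ = (∑ p : X, ∑ q : X, if h : p ≤ q then f p q • eI K p q h else 0) u v := by
        rw [sum_apply]
        apply Finset.sum_congr rfl; intro p _
        rw [sum_apply]

lemma mem_derivedSpan_of_diag_zero (f : IncidenceAlgebra K X) (hf : ∀ x, f x x = 0) :
    f ∈ derivedSpan K (IncidenceAlgebra K X) := by
  rw [eq_sum_eI f]
  apply Submodule.sum_mem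
  intro p _
  apply Submodule.sum_mem
  intro q _
  by_cases h : p ≤ q
  · rw [dif_pos h]
    by_cases hpq : p = q
    · subst hpq; rw [hf, zero_smul]; exact zero_mem _
    · exact Submodule.smul_mem _ _
        (Submodule.subset_span ⟨ee K p, eI K p q h, (lie_ee_eI p q h hpq).symm⟩)
  · rw [dif_neg h]; exact zero_mem _

lemma lie_diag_zero (a b : IncidenceAlgebra K X) (x : X) : ⁅a, b⁆ x x = 0 := by
  rw [Ring.lie_def, IncidenceAlgebra.sub_apply, IncidenceAlgebra.mul_apply,
    IncidenceAlgebra.mul_apply, Finset.Icc_self, Finset.sum_singleton, Finset.sum_singleton]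
  ring

lemma derived_diag_zero (f : IncidenceAlgebra K X)
    (hf : f ∈ derivedSpan K (IncidenceAlgebra K X)) : ∀ x, f x x = 0 := by
  induction hf using Submodule.span_induction with
  | mem z hz => obtain ⟨a, b, rfl⟩ := hz; exact lie_diag_zero a b
  | zero => intro x; rfl
  | add a b _ _ ha hb => intro x; rw [IncidenceAlgebra.add_apply, ha x, hb x, add_zero]
  | smul t a _ ha => intro x; rw [IncidenceAlgebra.constSMul_apply, ha x, smul_zero]

lemma central_of_support (c : IncidenceAlgebra K X)
    (hc : ∀ u v : X, c u v ≠ 0 → (∀ r, ¬ v < r) ∧ (∀ o, ¬ o < u))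
    (f : IncidenceAlgebra K X) (hf : ∀ x, f x x = 0) : ⁅c, f⁆ = 0 := by
  apply IncidenceAlgebra.ext
  intro u v huv
  rw [Ring.lie_def, IncidenceAlgebra.sub_apply, IncidenceAlgebra.mul_apply,
    IncidenceAlgebra.mul_apply, IncidenceAlgebra.zero_apply]
  have h1 : ∀ z ∈ Finset.Icc u v, c u z * f z v = 0 := by
    intro z hz
    by_cases h : c u z = 0
    · rw [h, zero_mul]
    · have hzv : z = v := by
        by_contra hne
        exact ((hc u z h).1 v) (lt_of_le_of_ne (Finset.mem_Icc.mp hz).2 hne)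
      rw [hzv, hf v, mul_zero]
  have h2 : ∀ z ∈ Finset.Icc u v, f u z * c z v = 0 := by
    intro z hz
    by_cases h : c z v = 0
    · rw [h, mul_zero]
    · have hzu : u = z := by
        by_contra hne
        exact ((hc z v h).2 u) (lt_of_le_of_ne (Finset.mem_Icc.mp hz).1 hne)
      rw [← hzu, hf u, zero_mul]
  rw [Finset.sum_congr rfl h1, Finset.sum_congr rfl h2, Finset.sum_const_zero, sub_zero]

section withPhi
variable (φ : IncidenceAlgebra K X →ₗ[K] IncidenceAlgebra K X)

/-- the candidate central element -/
def cElt : IncidenceAlgebra K X :=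
  ⟨fun u v => if u = v then 0 else φ (ee K v) u v, by
    intro u v huv
    show (if u = v then 0 else φ (ee K v) u v) = 0
    rw [if_neg (fun h => huv (le_of_eq h)), IncidenceAlgebra.apply_eq_zero_of_not_le huv]⟩

lemma cElt_apply (u v : X) : cElt φ u v = if u = v then 0 else φ (ee K v) u v := rfl

/-- `ad_c` as a linear map -/
def adc : IncidenceAlgebra K X →ₗ[K] IncidenceAlgebra K X where
  toFun a := ⁅cElt φ, a⁆
  map_add' a b := lie_add _ a b
  map_smul' t a := by
    show ⁅cElt φ, t • a⁆ = (RingHom.id K) t • ⁅cElt φ, a⁆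
    rw [RingHom.id_apply, Ring.lie_def, Ring.lie_def, smul_sub, mul_smul_comm, smul_mul_assoc]

/-- the diagonality preserving part -/
def phiT : IncidenceAlgebra K X →ₗ[K] IncidenceAlgebra K X := φ - adc φ

lemma phiT_apply (a : IncidenceAlgebra K X) : phiT φ a = φ a - ⁅cElt φ, a⁆ := rfl

variable (hφ : ∀ a b : IncidenceAlgebra K X, φ ⁅a, b⁆ = (2⁻¹ : K) • (⁅φ a, b⁆ + ⁅a, φ b⁆))
include hφ

lemma cElt_support (u v : X) (h : cElt φ u v ≠ 0) :
    (∀ r, ¬ v < r) ∧ (∀ o, ¬ o < u) := by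
  rw [cElt_apply] at h
  have huv : u ≠ v := by intro hh; rw [if_pos hh] at h; exact h rfl
  rw [if_neg huv] at h
  have hle : u ≤ v := IncidenceAlgebra.le_of_ne_zero (f := φ (ee K v)) h
  have hlt : u < v := lt_of_le_of_ne hle huv
  constructor
  · intro r hr; exact h (L2 φ hφ u v r hlt hr)
  · intro o ho; exact h (L3 φ hφ o u v ho hlt)

lemma cElt_central (f : IncidenceAlgebra K X)
    (hf : f ∈ derivedSpan K (IncidenceAlgebra K X)) : ⁅cElt φ, f⁆ = 0 :=
  central_of_support (cElt φ) (fun u v h => cElt_support φ hφ u v h) f (derived_diag_zero f hf)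

lemma phiT_ee_diag (x : X) : IsDiagI (phiT φ (ee K x)) := by
  intro u v huv
  rw [phiT_apply, IncidenceAlgebra.sub_apply, lie_ee_apply]
  by_cases hxu : x = u
  · subst hxu
    have hxv : x ≠ v := huv
    rw [if_neg (fun h : x = v => hxv h), if_pos rfl, cElt_apply, if_neg hxv]
    rw [C2 φ hφ x v hxv]
    ring
  · by_cases hxv : x = v
    · subst hxv
      rw [if_pos rfl, if_neg (fun h : x = u => hxu h), cElt_apply, if_neg (fun h : u = x => hxu h.symm)]
      ring
    · rw [if_neg (fun h : x = v => hxv h), if_neg (fun h : x = u => hxu h)]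
      rw [C1 φ hφ x u v (fun h => hxu h) (fun h => hxv h) huv]
      ring

lemma phiT_diag (f : IncidenceAlgebra K X) (hf : IsDiagI f) : IsDiagI (phiT φ f) := by
  have hdec : f = ∑ x : X, f x x • ee K x := by
    apply IncidenceAlgebra.ext
    intro u v _
    rw [sum_apply]
    have : ∀ x : X, (f x x • ee K x) u v = if x = u ∧ x = v then f x x else 0 := by
      intro x
      rw [IncidenceAlgebra.constSMul_apply, smul_eq_mul]
      unfold ee; rw [eI_apply]
      by_cases h : x = u ∧ x = v
      · rw [if_pos h, if_pos h, mul_one]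
      · rw [if_neg h, if_neg h, mul_zero]
    rw [Finset.sum_congr rfl (fun x _ => this x)]
    by_cases huv : u = v
    · subst huv
      rw [Finset.sum_eq_single u]
      · rw [if_pos ⟨rfl, rfl⟩]
      · intro x _ hx; rw [if_neg (fun hh => hx hh.1)]
      · intro h; exact absurd (Finset.mem_univ u) h
    · rw [hf u v huv, Finset.sum_eq_zero]
      intro x _
      rw [if_neg]
      rintro ⟨rfl, rfl⟩; exact huv rfl
  intro u v huv
  rw [hdec, map_sum, sum_apply]
  apply Finset.sum_eq_zero
  intro x _
  rw [map_smul, IncidenceAlgebra.constSMul_apply, phiT_ee_diag φ hφ x u v huv, smul_zero]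

lemma phiT_half (a b : IncidenceAlgebra K X) :
    phiT φ ⁅a, b⁆ = (2⁻¹ : K) • (⁅phiT φ a, b⁆ + ⁅a, phiT φ b⁆) := by
  have h1 : ⁅cElt φ, ⁅a, b⁆⁆ = 0 :=
    cElt_central φ hφ _ (Submodule.subset_span ⟨a, b, rfl⟩)
  rw [phiT_apply, phiT_apply, phiT_apply, h1, sub_zero, hφ a b]
  rw [sub_lie, lie_sub]
  have h2 : ⁅⁅cElt φ, a⁆, b⁆ + ⁅a, ⁅cElt φ, b⁆⁆ = 0 := by
    rw [← leibniz_lie]; exact h1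
  have : ⁅φ a, b⁆ - ⁅⁅cElt φ, a⁆, b⁆ + (⁅a, φ b⁆ - ⁅a, ⁅cElt φ, b⁆⁆)
      = ⁅φ a, b⁆ + ⁅a, φ b⁆ - (⁅⁅cElt φ, a⁆, b⁆ + ⁅a, ⁅cElt φ, b⁆⁆) := by abel
  rw [this, h2, sub_zero]

end withPhi
end S11

/-- every `1/2`-derivation `φ` of `I(X,K)` decomposes uniquely as
`φ = ad_c + φ̃` with `c ∈ Z([I(X,K), I(X,K)])` and `φ̃` a diagonality-preserving
`1/2`-derivation. -/
theorem statement11 (K X : Type*) [Field K] [CharZero K] [PartialOrder X] [Fintype X]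
    [LocallyFiniteOrder X] [DecidableEq X] (hconn : ConnectedPoset X)
    (φ : IncidenceAlgebra K X →ₗ[K] IncidenceAlgebra K X)
    (hφ : IsHalfDerivation K (IncidenceAlgebra K X) φ) :
    ∃! p : IncidenceAlgebra K X × (IncidenceAlgebra K X →ₗ[K] IncidenceAlgebra K X),
      (p.1 ∈ derivedSpan K (IncidenceAlgebra K X) ∧
        ∀ f ∈ derivedSpan K (IncidenceAlgebra K X), ⁅p.1, f⁆ = 0) ∧
      IsHalfDerivation K (IncidenceAlgebra K X) p.2 ∧
      (∀ f : IncidenceAlgebra K X, IsDiagI f → IsDiagI (p.2 f)) ∧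
      (∀ a : IncidenceAlgebra K X, φ a = ⁅p.1, a⁆ + p.2 a) := by
  have hφ' : ∀ a b : IncidenceAlgebra K X,
      φ ⁅a, b⁆ = (2⁻¹ : K) • (⁅φ a, b⁆ + ⁅a, φ b⁆) := hφ
  refine ⟨⟨S11.cElt φ, S11.phiT φ⟩, ⟨⟨?_, ?_⟩, ?_, ?_, ?_⟩, ?_⟩
  · exact S11.mem_derivedSpan_of_diag_zero _
      (fun x => by rw [S11.cElt_apply, if_pos rfl])
  · exact fun f hf => S11.cElt_central φ hφ' f hf
  · exact fun a b => S11.phiT_half φ hφ' a b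
  · exact fun f hf => S11.phiT_diag φ hφ' f hf
  · intro a
    rw [S11.phiT_apply]
    abel
  · rintro ⟨d, ψ⟩ ⟨⟨hd1, _hd2⟩, _hψhalf, hψdiag, hdecomp⟩
    have hlie : ∀ x : X, ⁅d - S11.cElt φ, S11.ee K x⁆
        = S11.phiT φ (S11.ee K x) - ψ (S11.ee K x) := by
      intro x
      have h1 : ⁅d, S11.ee K x⁆ = φ (S11.ee K x) - ψ (S11.ee K x) := by
        rw [hdecomp (S11.ee K x)]; abel
      have h2 : ⁅S11.cElt φ, S11.ee K x⁆ = φ (S11.ee K x) - S11.phiT φ (S11.ee K x) := by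
        rw [S11.phiT_apply]; abel
      rw [sub_lie, h1, h2]; abel
    have hg : d - S11.cElt φ = 0 := by
      apply IncidenceAlgebra.ext
      intro u v _
      rw [IncidenceAlgebra.sub_apply, IncidenceAlgebra.zero_apply]
      by_cases huv : u = v
      · subst huv
        rw [S11.derived_diag_zero d hd1 u, S11.cElt_apply, if_pos rfl, sub_zero]
      · have h3 := S11.entry_eq (hlie v) u v
        rw [S11.lie_ee_apply, if_pos rfl, if_neg (fun h : v = u => huv h.symm),
          IncidenceAlgebra.sub_apply, IncidenceAlgebra.sub_apply] at h3
        rw [S11.phiT_ee_diag φ hφ' v u v huv,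
          hψdiag (S11.ee K v) (S11.ee_diag v) u v huv] at h3
        linear_combination h3
    have hd : d = S11.cElt φ := by
      have := sub_eq_zero.mp hg
      exact this
    have hψ : ψ = S11.phiT φ := by
      apply LinearMap.ext
      intro a
      rw [S11.phiT_apply, ← hd, hdecomp a]
      abel
    rw [hd, hψ]
end
end
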